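/- arXiv:2312.06206 — 4 statements merged into one kernel-verified Lean document; each statement's English description precedes it below -/
import Mathlib

section
/- Let α ∈ (1,2) and define a_i^{(α)} := (1/2π) ∫_{-π}^{π} (4 sin²(η/2))^{α/2} exp(-i·i·η) dη for i ∈ ℤ. Then a_i^{(α)} = (-1)^i Γ(α+1) / (Γ(α/2 - i + 1) Γ(α/2 + i + 1)). -/
set_option maxHeartbeats 1000000

open Real Complex MeasureTheory intervalIntegral Set


lemma cont_aux (γ : ℝ) (hγ : 0 ≤ γ) : Continuous fun t : ℝ => (1 - t^2) ^ γ :=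
  (continuous_const.sub (continuous_pow 2)).rpow_const fun _ => Or.inr hγ

lemma pt_split (γ : ℝ) (hγ : 0 < γ) (t : ℝ) :
    t^2 * (1 - t^2) ^ γ = (1 - t^2) ^ γ - (1 - t^2) ^ (γ+1) := by
  by_cases h : (1:ℝ) - t^2 = 0
  · rw [h, Real.zero_rpow hγ.ne', Real.zero_rpow (by linarith)]; ring
  · rw [Real.rpow_add_one h]; ring

lemma J_rec (γ : ℝ) (hγ : 0 < γ) :
    (2*γ+3) * ∫ t in (0:ℝ)..1, (1 - t^2) ^ (γ+1) =
      (2*γ+2) * ∫ t in (0:ℝ)..1, (1 - t^2) ^ γ := by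
  have hD : ∀ t ∈ uIcc (0:ℝ) 1,
      HasDerivAt (fun t : ℝ => t * (1 - t^2) ^ (γ+1))
        ((2*γ+3) * (1 - t^2) ^ (γ+1) - (2*γ+2) * (1 - t^2) ^ γ) t := by
    intro t _
    have h2 : HasDerivAt (fun t : ℝ => 1 - t^2) (-(2*t)) t := by
      simpa using (hasDerivAt_pow 2 t).const_sub 1
    have h3 := h2.rpow_const (p := γ+1) (Or.inr (by linarith))
    have h4 := (hasDerivAt_id t).mul h3
    refine h4.congr_deriv ?_; symm
    simp only [id]
    have he : γ + 1 - 1 = γ := by ring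
    rw [he]
    linear_combination (2*γ+2) * pt_split γ hγ t
  have hInt : IntervalIntegrable
      (fun t : ℝ => (2*γ+3) * (1 - t^2) ^ (γ+1) - (2*γ+2) * (1 - t^2) ^ γ) volume 0 1 :=
    ((continuous_const.mul (cont_aux (γ+1) (by linarith))).sub
      (continuous_const.mul (cont_aux γ hγ.le))).intervalIntegrable 0 1
  have h := intervalIntegral.integral_eq_sub_of_hasDerivAt hD hInt
  rw [intervalIntegral.integral_sub (f := fun t : ℝ => (2*γ+3) * (1 - t^2) ^ (γ+1)) (g := fun t : ℝ => (2*γ+2) * (1 - t^2) ^ γ)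
      ((continuous_const.mul (cont_aux (γ+1) (by linarith))).intervalIntegrable 0 1)
      ((continuous_const.mul (cont_aux γ hγ.le)).intervalIntegrable 0 1),
    intervalIntegral.integral_const_mul, intervalIntegral.integral_const_mul] at h
  have h10 : (1:ℝ) - 1^2 = 0 := by norm_num
  rw [h10, Real.zero_rpow (by linarith : γ + 1 ≠ 0)] at h
  norm_num at h
  linarith

lemma beta_sub (γ : ℝ) (hγ : 0 < γ) :
    Complex.betaIntegral (3/2) (γ+1) =
      Complex.ofReal (2 * ((∫ t in (0:ℝ)..1, (1 - t^2) ^ γ) - ∫ t in (0:ℝ)..1, (1 - t^2) ^ (γ+1))) := by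
  have hg : Continuous fun s : ℝ => s ^ (1/2 : ℝ) * (1-s) ^ γ :=
    (continuous_id.rpow_const fun _ => Or.inr (by norm_num)).mul
      ((continuous_const.sub continuous_id).rpow_const fun _ => Or.inr hγ.le)
  have hsub : (∫ s in (0:ℝ)..1, s ^ (1/2 : ℝ) * (1-s) ^ γ)
      = ∫ t in (0:ℝ)..1, (2*t) • ((fun s : ℝ => s ^ (1/2 : ℝ) * (1-s) ^ γ) ∘ (fun t : ℝ => t^2)) t := by
    rw [intervalIntegral.integral_comp_smul_deriv (f := fun t : ℝ => t^2) (f' := fun t : ℝ => 2*t)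
      (fun t _ => by simpa using hasDerivAt_pow 2 t) (by fun_prop) hg]
    norm_num
  -- identify the substituted integrand
  have hpt : ∀ t ∈ uIcc (0:ℝ) 1,
      (2*t) • ((fun s : ℝ => s ^ (1/2 : ℝ) * (1-s) ^ γ) ∘ (fun t : ℝ => t^2)) t
        = 2 * ((1 - t^2) ^ γ - (1 - t^2) ^ (γ+1)) := by
    intro t ht
    rw [uIcc_of_le (by norm_num)] at ht
    have ht0 : 0 ≤ t := ht.1
    have hsq : (t^2) ^ (1/2 : ℝ) = t := by
      rw [← Real.rpow_natCast t 2, ← Real.rpow_mul ht0]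
      norm_num
    simp only [Function.comp, smul_eq_mul, hsq]
    rw [← pt_split γ hγ t]; ring
  have hreal : (∫ s in (0:ℝ)..1, s ^ (1/2 : ℝ) * (1-s) ^ γ)
      = 2 * ((∫ t in (0:ℝ)..1, (1 - t^2) ^ γ) - ∫ t in (0:ℝ)..1, (1 - t^2) ^ (γ+1)) := by
    rw [hsub, intervalIntegral.integral_congr hpt]
    rw [intervalIntegral.integral_const_mul,
      intervalIntegral.integral_sub ((cont_aux γ hγ.le).intervalIntegrable 0 1)
        ((cont_aux (γ+1) (by linarith)).intervalIntegrable 0 1)]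
  rw [← hreal]
  rw [Complex.betaIntegral]
  rw [← intervalIntegral.integral_ofReal]
  apply intervalIntegral.integral_congr
  intro x hx
  rw [uIcc_of_le (by norm_num)] at hx
  push_cast
  rw [Complex.ofReal_cpow hx.1, Complex.ofReal_cpow (by linarith [hx.2] : (0:ℝ) ≤ 1 - x)]
  push_cast
  norm_num

lemma J_val (γ : ℝ) (hγ : 0 < γ) :
    ∫ t in (0:ℝ)..1, (1 - t^2) ^ γ = √π * Real.Gamma (γ+1) / (2 * Real.Gamma (γ + 3/2)) := by
  have hbeta := Complex.Gamma_mul_Gamma_eq_betaIntegral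
    (s := (3/2 : ℂ)) (t := (γ : ℂ) + 1) (by norm_num) (by simp; linarith)
  rw [beta_sub γ hγ] at hbeta
  have e1 : ((3/2 : ℂ)) = ((3/2 : ℝ) : ℂ) := by norm_num
  have e2 : ((γ : ℂ) + 1) = (((γ + 1 : ℝ)) : ℂ) := by push_cast; ring
  have e3 : ((3/2 : ℂ) + ((γ:ℂ)+1)) = (((γ + 5/2 : ℝ)) : ℂ) := by push_cast; ring
  rw [e3, e1] at hbeta
  rw [show ((γ:ℂ)+1) = (((γ + 1 : ℝ)) : ℂ) by push_cast; ring] at hbeta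
  rw [Complex.Gamma_ofReal, Complex.Gamma_ofReal, Complex.Gamma_ofReal] at hbeta
  rw [← Complex.ofReal_mul, ← Complex.ofReal_mul] at hbeta
  have hbr : Real.Gamma (3/2) * Real.Gamma (γ+1)
      = Real.Gamma (γ + 5/2) * (2 * ((∫ t in (0:ℝ)..1, (1 - t^2) ^ γ) - ∫ t in (0:ℝ)..1, (1 - t^2) ^ (γ+1))) :=
    Complex.ofReal_inj.mp hbeta
  -- use J_rec to eliminate the (γ+1) integral
  have hrec := J_rec γ hγ
  set J := ∫ t in (0:ℝ)..1, (1 - t^2) ^ γ with hJ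
  set J' := ∫ t in (0:ℝ)..1, (1 - t^2) ^ (γ+1) with hJ'
  have h23 : (2*γ+3) ≠ 0 := by linarith
  have hJ'val : J' = (2*γ+2)/(2*γ+3) * J := by field_simp; linarith
  rw [hJ'val] at hbr
  -- Gamma values
  have hg32 : Real.Gamma (3/2 : ℝ) = √π / 2 := by
    have := Real.Gamma_add_one (s := (1/2:ℝ)) (by norm_num)
    rw [Real.Gamma_one_half_eq] at this
    norm_num at this ⊢
    rw [show (3/2 : ℝ) = 1/2 + 1 by norm_num]
    rw [Real.Gamma_add_one (by norm_num), Real.Gamma_one_half_eq]; ring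
  have hg52 : Real.Gamma (γ + 5/2) = (γ + 3/2) * Real.Gamma (γ + 3/2) := by
    rw [show γ + 5/2 = (γ + 3/2) + 1 by ring, Real.Gamma_add_one (by linarith)]
  rw [hg32, hg52] at hbr
  have hgpos : 0 < Real.Gamma (γ + 3/2) := Real.Gamma_pos_of_pos (by linarith)
  field_simp at hbr ⊢
  nlinarith [hbr, hgpos]

lemma cos_rpow_cont (α : ℝ) (hα : 0 ≤ α) : Continuous fun x : ℝ => Real.cos x ^ α :=
  Real.continuous_cos.rpow_const fun _ => Or.inr hα

lemma cos_base (α : ℝ) (hα1 : 1 < α) (hα2 : α < 2) :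
    ∫ x in (-(π/2))..(π/2), Real.cos x ^ α
      = π * (2:ℝ) ^ (-α) * Real.Gamma (α+1) / (Real.Gamma (α/2+1) * Real.Gamma (α/2+1)) := by
  set γ : ℝ := (α-1)/2 with hγdef
  have hγ : 0 < γ := by simp only [hγdef]; linarith
  -- substitution t = sin x
  have hsubst : ∫ x in (-(π/2))..(π/2), Real.cos x ^ α = ∫ t in (-1:ℝ)..1, (1 - t^2) ^ γ := by
    have := intervalIntegral.integral_comp_smul_deriv (a := -(π/2)) (b := π/2)
      (f := Real.sin) (f' := Real.cos) (g := fun t : ℝ => (1 - t^2) ^ γ)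
      (fun x _ => Real.hasDerivAt_sin x) Real.continuous_cos.continuousOn (cont_aux γ hγ.le)
    rw [Real.sin_neg, Real.sin_pi_div_two] at this
    rw [← this]
    apply intervalIntegral.integral_congr
    intro x hx
    rw [uIcc_of_le (by linarith [Real.pi_pos] : -(π/2) ≤ π/2)] at hx
    have hc : 0 ≤ Real.cos x := Real.cos_nonneg_of_mem_Icc hx
    simp only [Function.comp, smul_eq_mul]
    rw [show (1:ℝ) - Real.sin x ^ 2 = Real.cos x ^ 2 from (Real.cos_sq' x).symm]
    by_cases h0 : Real.cos x = 0
    · rw [h0]; rw [Real.zero_rpow (by linarith)]; simp [Real.zero_rpow hγ.ne']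
    · rw [← Real.rpow_natCast (Real.cos x) 2, ← Real.rpow_mul hc]
      rw [show Real.cos x ^ α = Real.cos x ^ ((2:ℕ) * γ + 1) by
        push_cast; rw [show (2:ℝ) * γ + 1 = α by simp only [hγdef]; ring]]
      rw [Real.rpow_add_one h0]
      push_cast
      ring
  -- evenness: ∫_{-1}^{1} = 2 ∫_0^1
  have heven : ∫ t in (-1:ℝ)..1, (1 - t^2) ^ γ = 2 * ∫ t in (0:ℝ)..1, (1 - t^2) ^ γ := by
    have h1 : ∫ t in (-1:ℝ)..0, (1 - t^2) ^ γ = ∫ t in (0:ℝ)..1, (1 - t^2) ^ γ := by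
      have h := intervalIntegral.integral_comp_neg (a := (0:ℝ)) (b := 1) (fun t => (1 - t^2) ^ γ)
      simp only [neg_sq, neg_zero] at h
      exact h.symm
    rw [← intervalIntegral.integral_add_adjacent_intervals (b := (0:ℝ))
      ((cont_aux γ hγ.le).intervalIntegrable _ _) ((cont_aux γ hγ.le).intervalIntegrable _ _), h1]
    ring
  rw [hsubst, heven, J_val γ hγ]
  have e1 : γ + 1 = (α+1)/2 := by simp only [hγdef]; ring
  have e2 : γ + 3/2 = α/2 + 1 := by simp only [hγdef]; ring
  rw [e1, e2]
  -- duplication formula with s = (α+1)/2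
  have hdup := Real.Gamma_mul_Gamma_add_half ((α+1)/2)
  rw [show (α+1)/2 + 1/2 = α/2 + 1 by ring, show 2 * ((α+1)/2) = α + 1 by ring] at hdup
  have h2 : ((2:ℝ)) ^ (1 - (α+1)) = 2 ^ (-α) := by norm_num
  rw [h2] at hdup
  have hgpos : 0 < Real.Gamma (α/2+1) := Real.Gamma_pos_of_pos (by linarith)
  have hspos : (0:ℝ) < √π := Real.sqrt_pos.mpr Real.pi_pos
  have hsq : √π * √π = π := Real.mul_self_sqrt Real.pi_pos.le
  have key : √π * Real.Gamma ((α+1)/2) = π * 2^(-α) * Real.Gamma (α+1) / Real.Gamma (α/2+1) := by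
    rw [eq_div_iff hgpos.ne']
    linear_combination √π * hdup + 2^(-α) * Real.Gamma (α+1) * hsq
  rw [mul_div_assoc'] at *
  rw [key]
  field_simp

lemma h_cont (α : ℝ) (hα : 0 ≤ α) (c : ℂ) :
    Continuous fun x : ℝ => (↑(Real.cos x ^ α) : ℂ) * Complex.exp (c*(x:ℂ)) :=
  (Complex.continuous_ofReal.comp (cos_rpow_cont α hα)).mul
    (Complex.continuous_exp.comp (by fun_prop))

lemma f_rec (α : ℝ) (hα1 : 1 < α) (hα2 : α < 2) (n : ℤ) :
    ((α:ℂ) - 2*n) * (∫ x in (-(π/2))..(π/2), (↑(Real.cos x ^ α) : ℂ) * Complex.exp (-2*Complex.I*(n:ℂ)*(x:ℂ)))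
      = ((α:ℂ) + 2*n + 2) * (∫ x in (-(π/2))..(π/2), (↑(Real.cos x ^ α) : ℂ) * Complex.exp (-2*Complex.I*((n:ℂ)+1)*(x:ℂ))) := by
  have hcont0 : Continuous fun x : ℝ => (↑(Real.cos x ^ α) : ℂ) * Complex.exp (-2*Complex.I*(n:ℂ)*(x:ℂ)) :=
    h_cont α (by linarith) _
  have hcont1 : Continuous fun x : ℝ => (↑(Real.cos x ^ α) : ℂ) * Complex.exp (-2*Complex.I*((n:ℂ)+1)*(x:ℂ)) :=
    h_cont α (by linarith) _
  have hderiv : ∀ x ∈ uIcc (-(π/2)) (π/2),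
      HasDerivAt (fun x : ℝ => (↑(Real.cos x ^ (α+1)) : ℂ) * Complex.exp (-(2*(n:ℂ)+1)*Complex.I*(x:ℂ)))
        ((Complex.I/2) * (((α:ℂ) - 2*n) * ((↑(Real.cos x ^ α) : ℂ) * Complex.exp (-2*Complex.I*(n:ℂ)*(x:ℂ)))
          - ((α:ℂ) + 2*n + 2) * ((↑(Real.cos x ^ α) : ℂ) * Complex.exp (-2*Complex.I*((n:ℂ)+1)*(x:ℂ))))) x := by
    intro x _
    have d1r : HasDerivAt (fun x : ℝ => Real.cos x ^ (α+1)) (-Real.sin x * (α+1) * Real.cos x ^ α) x := by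
      have := (Real.hasDerivAt_cos x).rpow_const (p := α+1) (Or.inr (by linarith))
      simpa using this
    have d1 := d1r.ofReal_comp
    have dbase : HasDerivAt (fun x : ℝ => ((x:ℂ))) 1 x := by
      simpa using (hasDerivAt_id x).ofReal_comp
    have d2 : HasDerivAt (fun x : ℝ => Complex.exp (-(2*(n:ℂ)+1)*Complex.I*(x:ℂ)))
        (Complex.exp (-(2*(n:ℂ)+1)*Complex.I*(x:ℂ)) * (-(2*(n:ℂ)+1)*Complex.I)) x := by
      have := (dbase.const_mul (-(2*(n:ℂ)+1)*Complex.I)).cexp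
      simpa [mul_assoc] using this
    have dG := d1.mul d2
    refine dG.congr_deriv ?_; symm
    by_cases h0 : Real.cos x = 0
    · simp [h0, Real.zero_rpow (by linarith : α ≠ 0), Real.zero_rpow (by linarith : α + 1 ≠ 0)]
    · rw [Real.rpow_add_one h0 α]
      have hE1 : Complex.exp (-(2*(n:ℂ)+1)*Complex.I*(x:ℂ))
          = Complex.exp (-2*Complex.I*(n:ℂ)*(x:ℂ)) * Complex.exp (-(x:ℂ)*Complex.I) := by
        rw [← Complex.exp_add]; ring_nf
      have hE2 : Complex.exp (-2*Complex.I*((n:ℂ)+1)*(x:ℂ))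
          = Complex.exp (-2*Complex.I*(n:ℂ)*(x:ℂ)) * (Complex.exp (-(x:ℂ)*Complex.I))^2 := by
        rw [sq, ← Complex.exp_add, ← Complex.exp_add]; ring_nf
      have hEu : Complex.exp (-(x:ℂ)*Complex.I) = Complex.cos x - Complex.sin x * Complex.I := by
        rw [show -(x:ℂ)*Complex.I = (-(x:ℂ))*Complex.I by ring, Complex.exp_mul_I,
          Complex.cos_neg, Complex.sin_neg]; ring
      rw [hE1, hE2, hEu]
      push_cast
      linear_combination (-(((Real.cos x ^ α : ℝ) : ℂ) * Complex.exp (-2*Complex.I*(n:ℂ)*(x:ℂ)) *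
        Complex.I * ((α:ℂ)/2 - n))) * (Complex.sin_sq_add_cos_sq (x:ℂ)) +
        (-(((Real.cos x ^ α : ℝ) : ℂ) * Complex.exp (-2*Complex.I*(n:ℂ)*(x:ℂ)) *
        ((((α:ℂ)+2*n+2)/2) * Complex.sin (x:ℂ) ^ 2 * Complex.I
          - ((α:ℂ)+1) * Complex.cos (x:ℂ) * Complex.sin (x:ℂ)))) * Complex.I_sq
  have hDint : IntervalIntegrable (fun x : ℝ =>
      (Complex.I/2) * (((α:ℂ) - 2*n) * ((↑(Real.cos x ^ α) : ℂ) * Complex.exp (-2*Complex.I*(n:ℂ)*(x:ℂ)))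
        - ((α:ℂ) + 2*n + 2) * ((↑(Real.cos x ^ α) : ℂ) * Complex.exp (-2*Complex.I*((n:ℂ)+1)*(x:ℂ)))))
      volume (-(π/2)) (π/2) :=
    (continuous_const.mul ((continuous_const.mul hcont0).sub
      (continuous_const.mul hcont1))).intervalIntegrable _ _
  have hftc := intervalIntegral.integral_eq_sub_of_hasDerivAt hderiv hDint
  have hzero : (∫ x in (-(π/2))..(π/2),
      (Complex.I/2) * (((α:ℂ) - 2*n) * ((↑(Real.cos x ^ α) : ℂ) * Complex.exp (-2*Complex.I*(n:ℂ)*(x:ℂ)))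
        - ((α:ℂ) + 2*n + 2) * ((↑(Real.cos x ^ α) : ℂ) * Complex.exp (-2*Complex.I*((n:ℂ)+1)*(x:ℂ))))) = 0 := by
    rw [hftc]
    simp [Real.cos_pi_div_two, Real.zero_rpow (by linarith : α + 1 ≠ 0)]
  rw [intervalIntegral.integral_const_mul,
    intervalIntegral.integral_sub
      (f := fun x : ℝ => ((α:ℂ) - 2*n) * ((↑(Real.cos x ^ α) : ℂ) * Complex.exp (-2*Complex.I*(n:ℂ)*(x:ℂ))))
      (g := fun x : ℝ => ((α:ℂ) + 2*n + 2) * ((↑(Real.cos x ^ α) : ℂ) * Complex.exp (-2*Complex.I*((n:ℂ)+1)*(x:ℂ))))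
      ((continuous_const.mul hcont0).intervalIntegrable _ _)
      ((continuous_const.mul hcont1).intervalIntegrable _ _),
    intervalIntegral.integral_const_mul, intervalIntegral.integral_const_mul] at hzero
  have hI : (Complex.I/2) ≠ 0 := by simp [Complex.I_ne_zero]
  have := (mul_eq_zero.mp hzero).resolve_left hI
  linear_combination this

lemma half_add_ne (α : ℝ) (hα1 : 1 < α) (hα2 : α < 2) (k : ℤ) : α/2 + k ≠ 0 := by
  intro h
  have h1 : α = ((-2*k : ℤ) : ℝ) := by push_cast; linarith
  rw [h1] at hα1 hα2
  have : (1:ℤ) < -2*k := by exact_mod_cast hα1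
  have : (-2*k:ℤ) < 2 := by exact_mod_cast hα2
  omega

lemma gamma_ne (α : ℝ) (hα1 : 1 < α) (hα2 : α < 2) (r : ℝ) (k : ℤ) (hr : r = α/2 + k) :
    Real.Gamma r ≠ 0 := by
  apply Real.Gamma_ne_zero
  intro m hm
  exact half_add_ne α hα1 hα2 (k + m) (by push_cast at hm ⊢; linarith [hr]; )

lemma f_val (α : ℝ) (hα1 : 1 < α) (hα2 : α < 2) (n : ℤ) :
    (∫ x in (-(π/2))..(π/2), (↑(Real.cos x ^ α) : ℂ) * Complex.exp (-2*Complex.I*(n:ℂ)*(x:ℂ)))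
      = ((π * (2:ℝ) ^ (-α) * Real.Gamma (α+1) / (Real.Gamma (α/2 - n + 1) * Real.Gamma (α/2 + n + 1)) : ℝ) : ℂ) := by
  set T : ℤ → ℝ := fun m => π * (2:ℝ) ^ (-α) * Real.Gamma (α+1) / (Real.Gamma (α/2 - m + 1) * Real.Gamma (α/2 + m + 1)) with hT
  set F : ℤ → ℂ := fun m => ∫ x in (-(π/2))..(π/2), (↑(Real.cos x ^ α) : ℂ) * Complex.exp (-2*Complex.I*(m:ℂ)*(x:ℂ)) with hF
  show F n = ((T n : ℝ) : ℂ)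
  have tstep : ∀ m : ℤ, (α - 2*m) * T m = (α + 2*m + 2) * T (m+1) := by
    intro m
    have g1 : Real.Gamma (α/2 - m) ≠ 0 := gamma_ne α hα1 hα2 _ (-m) (by push_cast; ring)
    have gp : Real.Gamma (α/2 + m + 1) ≠ 0 := gamma_ne α hα1 hα2 _ (m+1) (by push_cast; ring)
    have s1 : α/2 - (m:ℝ) ≠ 0 := by
      have := half_add_ne α hα1 hα2 (-m); push_cast at this; intro h; exact this (by linarith)
    have s2 : α/2 + (m:ℝ) + 1 ≠ 0 := by
      have := half_add_ne α hα1 hα2 (m+1); push_cast at this; intro h; exact this (by linarith)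
    have e1 : α/2 - (m:ℝ) + 1 = (α/2 - m) + 1 := by ring
    have e2 : α/2 + ((m:ℤ):ℝ) + 1 = α/2 + m + 1 := by norm_num
    simp only [hT]
    push_cast
    rw [show α/2 - (m:ℝ) + 1 = (α/2 - m) + 1 by ring,
      show α/2 + ((m:ℝ)+1) + 1 = (α/2 + m + 1) + 1 by ring,
      show α/2 - ((m:ℝ)+1) + 1 = α/2 - m by ring,
      Real.Gamma_add_one s1, Real.Gamma_add_one s2]
    rw [mul_div_assoc', mul_div_assoc', div_eq_div_iff (mul_ne_zero (mul_ne_zero s1 g1) gp) (mul_ne_zero g1 (mul_ne_zero s2 gp))]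
    ring
  have Fstep : ∀ m : ℤ, ((α:ℂ) - 2*m) * F m = ((α:ℂ) + 2*m + 2) * F (m+1) := by
    intro m
    have := f_rec α hα1 hα2 m
    rw [show (∫ x in (-(π/2))..(π/2), (↑(Real.cos x ^ α) : ℂ) * Complex.exp (-2*Complex.I*((m:ℂ)+1)*(x:ℂ))) = F (m+1) by
      simp only [hF]; apply intervalIntegral.integral_congr; intro x _; push_cast; ring_nf] at this
    exact this
  have tcast : ∀ m : ℤ, ((α:ℂ) - 2*m) * ((T m : ℝ):ℂ) = ((((α - 2*m) * T m : ℝ)):ℂ) := by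
    intro m; push_cast; ring
  have tcast2 : ∀ m : ℤ, ((α:ℂ) + 2*m + 2) * ((T (m+1) : ℝ):ℂ) = ((((α + 2*m + 2) * T (m+1) : ℝ)):ℂ) := by
    intro m; push_cast; ring
  have hne : ∀ m : ℤ, ((α:ℂ) + 2*m + 2) ≠ 0 := by
    intro m h
    have h2 : (α + 2*(m:ℝ) + 2) = 0 := by
      exact_mod_cast (show ((α + 2*(m:ℝ) + 2 : ℝ):ℂ) = 0 by push_cast; linear_combination h)
    have h3 := half_add_ne α hα1 hα2 (m+1)
    push_cast at h3
    exact h3 (by linarith)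
  induction n using Int.induction_on with
  | zero =>
    have h1 : F 0 = ((∫ x in (-(π/2))..(π/2), Real.cos x ^ α : ℝ) : ℂ) := by
      simp only [hF]
      rw [← intervalIntegral.integral_ofReal]
      apply intervalIntegral.integral_congr; intro x _; push_cast; simp
    rw [h1, cos_base α hα1 hα2]
    simp only [hT]
    norm_num
  | succ k ih =>
    apply mul_left_cancel₀ (hne k)
    rw [← Fstep k, ih, tcast k, tstep k, ← tcast2 k]
  | pred k ih =>
    have hs := Fstep (-(k+1))
    rw [show (-((k:ℤ)+1)+1 : ℤ) = -k by ring, ih] at hs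
    push_cast at hs
    have hne' : ((α:ℂ) - 2 * -((k:ℂ)+1)) ≠ 0 := by
      have := hne k; push_cast at this ⊢; intro h; apply this; linear_combination h
    rw [show (-(k:ℤ) - 1) = -((k:ℤ)+1) by ring]
    apply mul_left_cancel₀ hne'
    rw [hs]
    have tr := tstep (-((k:ℤ)+1))
    rw [show (-((k:ℤ)+1)+1 : ℤ) = -k by ring] at tr
    have trC := congrArg (Complex.ofReal) tr
    push_cast at trC
    linear_combination -trC

theorem stmt_4 (α : ℝ) (hα1 : 1 < α) (hα2 : α < 2) (i : ℤ) :
    (1 / (2 * (π : ℂ))) *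
        ∫ η in (-π)..π,
          (((4 * Real.sin (η / 2) ^ 2) ^ (α / 2) : ℝ) : ℂ) * Complex.exp (-Complex.I * i * η) =
      (((-1 : ℝ) ^ i * Real.Gamma (α + 1) /
        (Real.Gamma (α / 2 - i + 1) * Real.Gamma (α / 2 + i + 1)) : ℝ) : ℂ) := by
  set g : ℝ → ℂ := fun η => (((4 * Real.sin (η / 2) ^ 2) ^ (α / 2) : ℝ) : ℂ) * Complex.exp (-Complex.I * i * η) with hg
  -- periodicity
  have hper : Function.Periodic g (2*π) := by
    intro η
    simp only [hg]
    have h1 : Real.sin ((η + 2*π)/2) = -Real.sin (η/2) := by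
      rw [show (η + 2*π)/2 = η/2 + π by ring, Real.sin_add_pi]
    have h2 : Complex.exp (-Complex.I * i * ((η + 2*π : ℝ) : ℂ)) = Complex.exp (-Complex.I * i * η) := by
      rw [show (-Complex.I * i * ((η + 2*π : ℝ) : ℂ)) = (-Complex.I * i * η) + ((-i : ℤ) : ℂ) * (2*π*Complex.I) by push_cast; ring,
        Complex.exp_add, Complex.exp_int_mul_two_pi_mul_I, mul_one]
    rw [h1, h2]
    norm_num
  -- shift the interval
  have hshift : (∫ η in (-π)..π, g η) = ∫ η in (0:ℝ)..(2*π), g η := by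
    have := hper.intervalIntegral_add_eq (-π) 0
    rw [show -π + 2*π = π by ring, zero_add] at this
    exact this
  -- substitution η = 2x + π
  have hsub : (∫ x in (-(π/2))..(π/2), g (2*x + π)) = (2:ℝ)⁻¹ • ∫ η in (0:ℝ)..(2*π), g η := by
    have := intervalIntegral.integral_comp_mul_add g (two_ne_zero) π (a := -(π/2)) (b := π/2)
    rw [show 2 * -(π/2) + π = 0 by ring, show 2 * (π/2) + π = 2*π by ring] at this
    exact this
  -- pointwise identification on [-π/2, π/2]
  have hneg1 : ((-1:ℂ)) ^ (-i) = ((-1:ℂ)) ^ i := by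
    have hsq : ((-1:ℂ)) ^ i * ((-1:ℂ)) ^ i = 1 := by
      rw [← zpow_add₀ (by norm_num : (-1:ℂ) ≠ 0), show i + i = 2*i by ring, zpow_mul]
      norm_num
    rw [zpow_neg]
    exact inv_eq_of_mul_eq_one_left hsq
  have hpt : ∀ x ∈ uIcc (-(π/2)) (π/2),
      g (2*x + π) = (((2:ℝ)^α : ℝ) : ℂ) * ((-1:ℂ)) ^ i * ((↑(Real.cos x ^ α) : ℂ) * Complex.exp (-2*Complex.I*(i:ℂ)*(x:ℂ))) := by
    intro x hx
    rw [uIcc_of_le (by linarith [Real.pi_pos]) ] at hx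
    have hc : 0 ≤ Real.cos x := Real.cos_nonneg_of_mem_Icc hx
    simp only [hg]
    have h1 : Real.sin ((2*x + π)/2) = Real.cos x := by
      rw [show (2*x + π)/2 = x + π/2 by ring, Real.sin_add_pi_div_two]
    have h2 : (4 * Real.cos x ^ 2 : ℝ) ^ (α/2) = (2:ℝ)^α * Real.cos x ^ α := by
      rw [show (4 * Real.cos x ^ 2 : ℝ) = (2 * Real.cos x)^(2:ℕ) by ring,
        ← Real.rpow_natCast (2 * Real.cos x) 2, ← Real.rpow_mul (by linarith)]
      rw [show ((2:ℕ):ℝ) * (α/2) = α by push_cast; ring]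
      exact Real.mul_rpow (by norm_num) hc
    have h3 : Complex.exp (-Complex.I * i * ((2*x + π : ℝ) : ℂ))
        = ((-1:ℂ)) ^ i * Complex.exp (-2*Complex.I*(i:ℂ)*(x:ℂ)) := by
      rw [show (-Complex.I * i * ((2*x + π : ℝ) : ℂ)) = ((-i : ℤ) : ℂ) * ((π:ℝ) * Complex.I) + (-2*Complex.I*(i:ℂ)*(x:ℂ)) by push_cast; ring,
        Complex.exp_add, Complex.exp_int_mul, Complex.exp_pi_mul_I, hneg1]
    rw [h1, h2, h3]
    push_cast
    ring
  have hF := f_val α hα1 hα2 i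
  -- nonvanishing
  have hΓ1 : Real.Gamma (α/2 - i + 1) ≠ 0 := gamma_ne α hα1 hα2 _ (1 - i) (by push_cast; ring)
  have hΓ2 : Real.Gamma (α/2 + i + 1) ≠ 0 := gamma_ne α hα1 hα2 _ (i + 1) (by push_cast; ring)
  have hπ : (π:ℝ) ≠ 0 := Real.pi_ne_zero
  have h2α : ((2:ℝ))^(-α) = ((2:ℝ)^α)⁻¹ := Real.rpow_neg (by norm_num) α
  have h2ne : ((2:ℝ))^α ≠ 0 := by positivity
  have hπC : ((π:ℝ):ℂ) ≠ 0 := Complex.ofReal_ne_zero.mpr hπ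
  have hΓ1C : ((Real.Gamma (α/2 - i + 1) : ℝ):ℂ) ≠ 0 := Complex.ofReal_ne_zero.mpr hΓ1
  have hΓ2C : ((Real.Gamma (α/2 + i + 1) : ℝ):ℂ) ≠ 0 := Complex.ofReal_ne_zero.mpr hΓ2
  have h2neC : (((2:ℝ)^α : ℝ):ℂ) ≠ 0 := Complex.ofReal_ne_zero.mpr h2ne
  rw [hshift]
  have hint2 : (∫ η in (0:ℝ)..(2*π), g η) = (2:ℝ) • ∫ x in (-(π/2))..(π/2), g (2*x+π) := by
    rw [hsub, smul_smul]; norm_num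
  rw [hint2, intervalIntegral.integral_congr hpt, intervalIntegral.integral_const_mul, hF,
    Complex.real_smul]
  have hkey : (2:ℝ)^α * (π * (2:ℝ)^(-α) * Real.Gamma (α+1) / (Real.Gamma (α/2 - i + 1) * Real.Gamma (α/2 + i + 1)))
      = π * (Real.Gamma (α+1) / (Real.Gamma (α/2 - i + 1) * Real.Gamma (α/2 + i + 1))) := by
    rw [h2α]; field_simp
  rw [show ((((2:ℝ)^α : ℝ):ℂ)) * ((-1:ℂ))^i *
        ((π * (2:ℝ) ^ (-α) * Real.Gamma (α+1) / (Real.Gamma (α/2 - i + 1) * Real.Gamma (α/2 + i + 1)) : ℝ) : ℂ)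
      = ((-1:ℂ))^i * (((2:ℝ)^α * (π * (2:ℝ) ^ (-α) * Real.Gamma (α+1) / (Real.Gamma (α/2 - i + 1) * Real.Gamma (α/2 + i + 1))) : ℝ) : ℂ) by
    push_cast; ring]
  rw [hkey]
  set G : ℝ := Real.Gamma (α+1) with hG
  set A : ℝ := Real.Gamma (α/2 - i + 1) with hA
  set B : ℝ := Real.Gamma (α/2 + i + 1) with hB
  push_cast
  field_simp
end

section
/- Let H ∈ ℝ^{N×N} be a symmetric positive definite Toeplitz matrix, let c = (p₁,...,p_N)ᵀ = H⁻¹e₁ where e₁ is the first standard basis vector, let J be the anti-identity (flip) matrix, let C be the circulant matrix whose first column is c, and let S be the skew-circulant matrix whose first column is (p₁, -p_N, -p_{N-1}, ..., -p₂)ᵀ. Then for any v ∈ ℝ^N, setting v̂ := (1/(2p₁)) C S (v + i J v), one has H⁻¹v = Re(v̂) + J Im(v̂). -/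
open Matrix Complex

namespace GS

variable {N : ℕ}

def Zm (N : ℕ) : Matrix (Fin N) (Fin N) ℝ :=
  Matrix.of fun i j => if (i : ℕ) = (j : ℕ) + 1 then 1 else 0

def Jm (N : ℕ) : Matrix (Fin N) (Fin N) ℝ :=
  Matrix.of fun i j => if j = Fin.rev i then 1 else 0

noncomputable def Lm {N : ℕ} (a : Fin N → ℝ) : Matrix (Fin N) (Fin N) ℝ :=
  ∑ k : Fin N, a k • (Zm N) ^ (k : ℕ)

lemma Zm_pow_apply (m : ℕ) (i j : Fin N) :
    ((Zm N) ^ m) i j = if (i : ℕ) = (j : ℕ) + m then 1 else 0 := by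
  induction m generalizing i j with
  | zero => simp [Matrix.one_apply, Fin.ext_iff]
  | succ m ih =>
    rw [pow_succ, Matrix.mul_apply]
    simp only [ih]
    simp only [Zm, Matrix.of_apply, ite_mul, one_mul, zero_mul, mul_ite, mul_one, mul_zero]
    by_cases h : (i : ℕ) = (j : ℕ) + (m + 1)
    · have hj1 : (j : ℕ) + 1 < N := by omega
      rw [Finset.sum_eq_single (⟨(j : ℕ) + 1, hj1⟩ : Fin N)]
      · have h1 : (i : ℕ) = ((⟨(j : ℕ) + 1, hj1⟩ : Fin N) : ℕ) + m := by simp; omega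
        have h2 : (j : ℕ) + 1 + m = (j : ℕ) + (m + 1) := by omega
        simp [h1, h2]
      · intro b _ hb
        by_cases h2 : (i : ℕ) = (b : ℕ) + m
        · have : (b : ℕ) ≠ (j : ℕ) + 1 := fun hc => hb (Fin.ext hc)
          simp [h2, this]
        · simp [h2]
      · simp
    · rw [if_neg h]
      apply Finset.sum_eq_zero
      intro b _
      by_cases h2 : (i : ℕ) = (b : ℕ) + m
      · have : (b : ℕ) ≠ (j : ℕ) + 1 := by omega
        simp [h2, this]
      · simp [h2]

lemma Zm_pow_N : (Zm N) ^ N = 0 := by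
  ext i j
  rw [Zm_pow_apply]
  have : (i : ℕ) ≠ (j : ℕ) + N := by have := i.isLt; omega
  simp [this]

lemma Lm_apply (a : Fin N → ℝ) (i j : Fin N) :
    Lm a i j = if h : (j : ℕ) ≤ (i : ℕ) then a ⟨(i : ℕ) - (j : ℕ), by omega⟩ else 0 := by
  rw [Lm, Matrix.sum_apply]
  simp only [Matrix.smul_apply, Zm_pow_apply, smul_eq_mul]
  by_cases h : (j : ℕ) ≤ (i : ℕ)
  · rw [dif_pos h, Finset.sum_eq_single (⟨(i : ℕ) - (j : ℕ), by omega⟩ : Fin N)]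
    · simp; omega
    · intro b _ hb
      have : (i : ℕ) ≠ (j : ℕ) + (b : ℕ) := by
        intro hc; exact hb (Fin.ext (by simp; omega))
      simp [this]
    · simp
  · rw [dif_neg h]
    apply Finset.sum_eq_zero
    intro b _
    have : (i : ℕ) ≠ (j : ℕ) + (b : ℕ) := by omega
    simp [this]

lemma Lm_mul_comm (a b : Fin N → ℝ) : Lm a * Lm b = Lm b * Lm a := by
  rw [Lm, Lm, Finset.sum_mul_sum, Finset.sum_mul_sum, Finset.sum_comm]
  refine Finset.sum_congr rfl fun k _ => Finset.sum_congr rfl fun l _ => ?_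
  rw [smul_mul_assoc, mul_smul_comm, smul_mul_assoc, mul_smul_comm,
    smul_smul, smul_smul, ← pow_add, ← pow_add, mul_comm (a l) (b k),
    add_comm (l : ℕ) (k : ℕ)]

lemma Zm_mul_Lm_comm (a : Fin N → ℝ) : Zm N * Lm a = Lm a * Zm N := by
  rw [Lm, Finset.mul_sum, Finset.sum_mul]
  refine Finset.sum_congr rfl fun k _ => ?_
  rw [mul_smul_comm, smul_mul_assoc, ← pow_succ, ← pow_succ']

lemma Lm_mulVec_single (a : Fin N → ℝ) (hN : 0 < N) :
    Lm a *ᵥ Pi.single (⟨0, hN⟩ : Fin N) 1 = a := by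
  ext i
  rw [Matrix.mulVec_single]
  simp [Lm_apply]

lemma Jm_mul_apply (M : Matrix (Fin N) (Fin N) ℝ) (i j : Fin N) :
    (Jm N * M) i j = M i.rev j := by
  rw [Matrix.mul_apply, Finset.sum_eq_single i.rev]
  · simp [Jm]
  · intro b _ hb; simp [Jm, hb]
  · simp

lemma mul_Jm_apply (M : Matrix (Fin N) (Fin N) ℝ) (i j : Fin N) :
    (M * Jm N) i j = M i j.rev := by
  rw [Matrix.mul_apply, Finset.sum_eq_single j.rev]
  · simp [Jm, Fin.rev_rev]
  · intro b _ hb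
    have : j ≠ b.rev := fun h => hb (by rw [h, Fin.rev_rev])
    simp [Jm, this]
  · simp

lemma Jm_mul_Jm : Jm N * Jm N = 1 := by
  ext i j
  rw [Jm_mul_apply]
  simp [Jm, Matrix.one_apply, Fin.rev_eq_iff, eq_comm]

lemma Jm_transpose : (Jm N)ᵀ = Jm N := by
  ext i j
  simp only [Matrix.transpose_apply, Jm, Matrix.of_apply]
  have : i = j.rev ↔ j = i.rev := by
    constructor <;> (intro h; rw [h, Fin.rev_rev])
  simp [this]

lemma Jm_mul_Zm_mul_Jm : Jm N * Zm N * Jm N = (Zm N)ᵀ := by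
  ext i j
  rw [mul_Jm_apply, Jm_mul_apply]
  simp only [Zm, Matrix.of_apply, Matrix.transpose_apply, Fin.val_rev]
  have h1 := i.isLt; have h2 := j.isLt
  have hiff : (N - ((i : ℕ) + 1) = N - ((j : ℕ) + 1) + 1) ↔ ((j : ℕ) = (i : ℕ) + 1) := by
    omega
  rw [if_congr hiff rfl rfl]


lemma Zm_mul_apply (M : Matrix (Fin N) (Fin N) ℝ) (i j : Fin N) :
    (Zm N * M) i j = if h : 1 ≤ (i : ℕ) then M ⟨(i : ℕ) - 1, by omega⟩ j else 0 := by
  rw [Matrix.mul_apply]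
  by_cases h : 1 ≤ (i : ℕ)
  · rw [dif_pos h, Finset.sum_eq_single (⟨(i : ℕ) - 1, by omega⟩ : Fin N)]
    · have : (i : ℕ) = ((⟨(i : ℕ) - 1, by omega⟩ : Fin N) : ℕ) + 1 := by simp; omega
      simp only [Zm, Matrix.of_apply]
      rw [if_pos this, one_mul]
    · intro b _ hb
      have : (i : ℕ) ≠ (b : ℕ) + 1 := fun hc => hb (Fin.ext (by simp; omega))
      simp [Zm, this]
    · simp
  · rw [dif_neg h]
    apply Finset.sum_eq_zero
    intro b _
    have : (i : ℕ) ≠ (b : ℕ) + 1 := by omega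
    simp [Zm, this]

lemma mul_Zm_apply (M : Matrix (Fin N) (Fin N) ℝ) (i j : Fin N) :
    (M * Zm N) i j = if h : (j : ℕ) + 1 < N then M i ⟨(j : ℕ) + 1, h⟩ else 0 := by
  rw [Matrix.mul_apply]
  by_cases h : (j : ℕ) + 1 < N
  · rw [dif_pos h, Finset.sum_eq_single (⟨(j : ℕ) + 1, h⟩ : Fin N)]
    · simp [Zm]
    · intro b _ hb
      have : (b : ℕ) ≠ (j : ℕ) + 1 := fun hc => hb (Fin.ext (by simpa using hc))
      simp [Zm, this]
    · simp
  · rw [dif_neg h]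
    apply Finset.sum_eq_zero
    intro b _
    have : (b : ℕ) ≠ (j : ℕ) + 1 := by have := b.isLt; omega
    simp [Zm, this]

lemma mul_Zmt_apply (M : Matrix (Fin N) (Fin N) ℝ) (i j : Fin N) :
    (M * (Zm N)ᵀ) i j = if h : 1 ≤ (j : ℕ) then M i ⟨(j : ℕ) - 1, by omega⟩ else 0 := by
  rw [Matrix.mul_apply]
  by_cases h : 1 ≤ (j : ℕ)
  · rw [dif_pos h, Finset.sum_eq_single (⟨(j : ℕ) - 1, by omega⟩ : Fin N)]
    · have : (j : ℕ) = ((⟨(j : ℕ) - 1, by omega⟩ : Fin N) : ℕ) + 1 := by simp; omega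
      simp only [Zm, Matrix.transpose_apply, Matrix.of_apply]
      rw [if_pos this, mul_one]
    · intro b _ hb
      have : (j : ℕ) ≠ (b : ℕ) + 1 := fun hc => hb (Fin.ext (by simp; omega))
      simp [Zm, this]
    · simp
  · rw [dif_neg h]
    apply Finset.sum_eq_zero
    intro b _
    have : (j : ℕ) ≠ (b : ℕ) + 1 := by omega
    simp [Zm, this]

lemma Zmt_mulVec (x : Fin N → ℝ) (j : Fin N) :
    ((Zm N)ᵀ *ᵥ x) j = if h : (j : ℕ) + 1 < N then x ⟨(j : ℕ) + 1, h⟩ else 0 := by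
  rw [Matrix.mulVec]
  show ∑ k, (Zm N)ᵀ j k * x k = _
  by_cases h : (j : ℕ) + 1 < N
  · rw [dif_pos h, Finset.sum_eq_single (⟨(j : ℕ) + 1, h⟩ : Fin N)]
    · simp [Zm]
    · intro b _ hb
      have : (b : ℕ) ≠ (j : ℕ) + 1 := fun hc => hb (Fin.ext (by simpa using hc))
      simp [Zm, this]
    · simp
  · rw [dif_neg h]
    apply Finset.sum_eq_zero
    intro b _
    have : (b : ℕ) ≠ (j : ℕ) + 1 := by have := b.isLt; omega
    simp [Zm, this]

lemma Zm_mulVec (x : Fin N → ℝ) (i : Fin N) :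
    (Zm N *ᵥ x) i = if h : 1 ≤ (i : ℕ) then x ⟨(i : ℕ) - 1, by omega⟩ else 0 := by
  rw [Matrix.mulVec]
  show ∑ k, Zm N i k * x k = _
  by_cases h : 1 ≤ (i : ℕ)
  · rw [dif_pos h, Finset.sum_eq_single (⟨(i : ℕ) - 1, by omega⟩ : Fin N)]
    · have : (i : ℕ) = ((⟨(i : ℕ) - 1, by omega⟩ : Fin N) : ℕ) + 1 := by simp; omega
      simp only [Zm, Matrix.of_apply]
      rw [if_pos this, one_mul]
    · intro b _ hb
      have : (i : ℕ) ≠ (b : ℕ) + 1 := fun hc => hb (Fin.ext (by simp; omega))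
      simp [Zm, this]
    · simp
  · rw [dif_neg h]
    apply Finset.sum_eq_zero
    intro b _
    have : (i : ℕ) ≠ (b : ℕ) + 1 := by omega
    simp [Zm, this]

lemma Jm_mulVec (x : Fin N → ℝ) (i : Fin N) : (Jm N *ᵥ x) i = x i.rev := by
  rw [Matrix.mulVec]
  show ∑ k, Jm N i k * x k = _
  rw [Finset.sum_eq_single i.rev]
  · simp [Jm]
  · intro b _ hb; simp [Jm, hb]
  · simp

lemma mul_vecMulVec (M : Matrix (Fin N) (Fin N) ℝ) (a b : Fin N → ℝ) :
    M * vecMulVec a b = vecMulVec (M *ᵥ a) b := by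
  ext i j
  simp only [Matrix.mul_apply, vecMulVec_apply, Matrix.mulVec, dotProduct,
    Finset.sum_mul]
  exact Finset.sum_congr rfl fun k _ => by ring

lemma vecMulVec_mul (M : Matrix (Fin N) (Fin N) ℝ) (a b : Fin N → ℝ) :
    vecMulVec a b * M = vecMulVec a (Mᵀ *ᵥ b) := by
  ext i j
  simp only [Matrix.mul_apply, vecMulVec_apply, Matrix.mulVec, dotProduct,
    Matrix.transpose_apply, Finset.mul_sum]
  exact Finset.sum_congr rfl fun k _ => by ring

lemma vecMulVec_mulVec (a b x : Fin N → ℝ) :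
    vecMulVec a b *ᵥ x = (b ⬝ᵥ x) • a := by
  ext i
  simp only [Matrix.mulVec, dotProduct, vecMulVec_apply, Pi.smul_apply, smul_eq_mul,
    Finset.sum_mul]
  exact Finset.sum_congr rfl fun k _ => by ring

lemma transpose_vecMulVec (a b : Fin N → ℝ) :
    (vecMulVec a b)ᵀ = vecMulVec b a := by
  ext i j; simp [vecMulVec_apply, mul_comm]

lemma smul_vecMulVec (r : ℝ) (a b : Fin N → ℝ) :
    vecMulVec (r • a) b = r • vecMulVec a b := by
  ext i j; simp [vecMulVec_apply, mul_assoc]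

lemma vecMulVec_smul (r : ℝ) (a b : Fin N → ℝ) :
    vecMulVec a (r • b) = r • vecMulVec a b := by
  ext i j; simp [vecMulVec_apply]; ring

lemma sum_tail (hN : 0 < N) (f : Fin N → ℝ) :
    ∑ m : Fin N, (if 1 ≤ (m : ℕ) then f m else 0) = (∑ m : Fin N, f m) - f ⟨0, hN⟩ := by
  have : ∀ m : Fin N, (if 1 ≤ (m : ℕ) then f m else 0)
      = f m - (if m = ⟨0, hN⟩ then f m else 0) := by
    intro m
    by_cases h : 1 ≤ (m : ℕ)
    · have : m ≠ ⟨0, hN⟩ := fun hc => by subst hc; simp at h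
      simp [h, this]
    · have h0 : (m : ℕ) = 0 := by omega
      have : m = ⟨0, hN⟩ := Fin.ext (by simp [h0])
      simp [h, this]
  rw [Finset.sum_congr rfl fun m _ => this m, Finset.sum_sub_distrib,
    Finset.sum_ite_eq' Finset.univ (⟨0, hN⟩ : Fin N) f]
  simp

lemma disp_eq_zero (D : Matrix (Fin N) (Fin N) ℝ) (h : D = Zm N * D * (Zm N)ᵀ) : D = 0 := by
  have key : ∀ m : ℕ, D = (Zm N) ^ m * D * ((Zm N)ᵀ) ^ m := by
    intro m
    induction m with
    | zero => simp
    | succ m ih =>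
      calc D = Zm N * D * (Zm N)ᵀ := h
      _ = Zm N * ((Zm N) ^ m * D * ((Zm N)ᵀ) ^ m) * (Zm N)ᵀ := by rw [← ih]
      _ = (Zm N) ^ (m + 1) * D * ((Zm N)ᵀ) ^ (m + 1) := by
          rw [pow_succ', pow_succ]
          simp only [Matrix.mul_assoc]
  have := key N
  rw [Zm_pow_N, ← Matrix.transpose_pow, Zm_pow_N] at this
  simpa using this

lemma Fin_sub_val (i j : Fin N) :
    ((i - j : Fin N) : ℕ) = if (j : ℕ) ≤ (i : ℕ) then (i : ℕ) - j else N + i - j := by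
  have hi := i.isLt; have hj := j.isLt
  rw [Fin.sub_def]
  show (N - (j : ℕ) + (i : ℕ)) % N = _
  by_cases h : (j : ℕ) ≤ (i : ℕ)
  · have h2 : N - (j : ℕ) + (i : ℕ) = ((i : ℕ) - j) + N := by omega
    rw [if_pos h, h2, Nat.add_mod_right, Nat.mod_eq_of_lt (by omega)]
  · have h2 : N - (j : ℕ) + (i : ℕ) = N + i - j := by omega
    rw [if_neg h, h2, Nat.mod_eq_of_lt (by omega)]

lemma Fin_neg_val (hN : 0 < N) (k : Fin N) :
    ((-k : Fin N) : ℕ) = if k = ⟨0, hN⟩ then 0 else N - k := by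
  have hk := k.isLt
  rw [Fin.neg_def]
  by_cases h : k = ⟨0, hN⟩
  · subst h; simp
  · have hk0 : (k : ℕ) ≠ 0 := fun hc => h (Fin.ext (by simp [hc]))
    rw [if_neg h]
    show (N - (k : ℕ)) % N = N - (k : ℕ)
    exact Nat.mod_eq_of_lt (by omega)


lemma vecMulVec_sub (a b c : Fin N → ℝ) :
    vecMulVec a (b - c) = vecMulVec a b - vecMulVec a c := by
  ext i j; simp [vecMulVec_apply, mul_sub]

lemma Jm_mul_Zm_pow_mul_Jm (m : ℕ) : Jm N * (Zm N) ^ m * Jm N = ((Zm N) ^ m)ᵀ := by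
  induction m with
  | zero => simp [Jm_mul_Jm]
  | succ m ih =>
    have h1 : (Zm N) ^ (m + 1) = (Zm N) ^ m * (Jm N * Jm N) * Zm N := by
      rw [Jm_mul_Jm, Matrix.mul_one, pow_succ]
    calc Jm N * (Zm N) ^ (m + 1) * Jm N
        = (Jm N * (Zm N) ^ m * Jm N) * (Jm N * Zm N * Jm N) := by
          rw [h1]; simp only [Matrix.mul_assoc]
      _ = ((Zm N) ^ m)ᵀ * (Zm N)ᵀ := by rw [ih, Jm_mul_Zm_mul_Jm]
      _ = ((Zm N) ^ (m + 1))ᵀ := by rw [← Matrix.transpose_mul, ← pow_succ']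

lemma Jm_mul_Lm_mul_Jm (a : Fin N → ℝ) : Jm N * Lm a * Jm N = (Lm a)ᵀ := by
  rw [Lm, Finset.mul_sum, Finset.sum_mul, Matrix.transpose_sum]
  refine Finset.sum_congr rfl fun k _ => ?_
  rw [Matrix.mul_smul, Matrix.smul_mul, Matrix.transpose_smul, Jm_mul_Zm_pow_mul_Jm]

lemma Jm_mul_transpose_mul_Jm (M : Matrix (Fin N) (Fin N) ℝ)
    (h : Jm N * M * Jm N = Mᵀ) : Jm N * Mᵀ * Jm N = M := by
  have h2 := congrArg Matrix.transpose h
  rw [Matrix.transpose_mul, Matrix.transpose_mul, Jm_transpose, Matrix.transpose_transpose] at h2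
  rw [← Matrix.mul_assoc] at h2
  simpa using h2

lemma Jm_conj_mul (A B : Matrix (Fin N) (Fin N) ℝ) :
    Jm N * (A * B) * Jm N = (Jm N * A * Jm N) * (Jm N * B * Jm N) := by
  conv_lhs => rw [show A * B = A * (Jm N * Jm N) * B by rw [Jm_mul_Jm, Matrix.mul_one]]
  simp only [Matrix.mul_assoc]

set_option maxHeartbeats 1600000 in
theorem gs_main (hN : 0 < N) (H : Matrix (Fin N) (Fin N) ℝ)
    (hT : ∀ i j k l : Fin N, (i : ℤ) - (j : ℤ) = (k : ℤ) - (l : ℤ) → H i j = H k l)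
    (hSymm : H.IsSymm) (hPD : H.PosDef)
    (x : Fin N → ℝ) (hx : x = H⁻¹ *ᵥ Pi.single ⟨0, hN⟩ 1)
    (z : Fin N → ℝ) (hz : z = Zm N *ᵥ (Jm N *ᵥ x)) :
    (Lm x + (Lm z)ᵀ) * ((Lm x)ᵀ - Lm z)
      + Jm N * ((Lm x + (Lm z)ᵀ) * ((Lm x)ᵀ - Lm z)) * Jm N
    = (2 * x ⟨0, hN⟩) • H⁻¹ := by
  set e0 : Fin N → ℝ := Pi.single ⟨0, hN⟩ 1 with he0
  set eL : Fin N → ℝ := Pi.single ((⟨0, hN⟩ : Fin N).rev) 1 with heL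
  set p : ℝ := x ⟨0, hN⟩ with hpdef
  have he0app : ∀ j : Fin N, e0 j = if (j : ℕ) = 0 then 1 else 0 := by
    intro j
    rw [he0, Pi.single_apply]
    refine if_congr ?_ rfl rfl
    rw [Fin.ext_iff]
  have heLapp : ∀ j : Fin N, eL j = if (j : ℕ) = N - 1 then 1 else 0 := by
    intro j
    rw [heL, Pi.single_apply]
    refine if_congr ?_ rfl rfl
    rw [Fin.ext_iff, Fin.val_rev]
  have hdet : IsUnit H.det := (Matrix.isUnit_iff_isUnit_det H).mp hPD.isUnit
  have hHB : H * H⁻¹ = 1 := Matrix.mul_nonsing_inv H hdet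
  have hBH : H⁻¹ * H = 1 := Matrix.nonsing_inv_mul H hdet
  have hBe0 : H⁻¹ *ᵥ e0 = x := hx.symm
  have hHx : H *ᵥ x = e0 := by rw [hx, Matrix.mulVec_mulVec, hHB, Matrix.one_mulVec]
  have hBt : (H⁻¹)ᵀ = H⁻¹ := by rw [Matrix.transpose_nonsing_inv, hSymm.eq]
  have hp : 0 < p := by
    have hinv := hPD.inv
    have he0ne : e0 ≠ 0 := by
      intro hc
      have := congrFun hc ⟨0, hN⟩
      simp [he0] at this
    have h1 := hinv.dotProduct_mulVec_pos he0ne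
    have h1' : (0 : ℝ) < e0 ⬝ᵥ (H⁻¹ *ᵥ e0) := by simpa using h1
    rw [hBe0] at h1'
    rw [hpdef]
    simpa [he0, single_dotProduct] using h1'
  have hpne : p ≠ 0 := ne_of_gt hp
  have hJHJ : Jm N * H * Jm N = H := by
    ext i j
    rw [mul_Jm_apply, Jm_mul_apply]
    have hi := i.isLt; have hj := j.isLt
    have h1 : H i.rev j.rev = H j i := by
      apply hT
      simp only [Fin.val_rev]
      omega
    rw [h1]
    exact hSymm.apply i j
  have hHJ : H * Jm N = Jm N * H := by
    calc H * Jm N = (Jm N * Jm N) * H * Jm N := by rw [Jm_mul_Jm, Matrix.one_mul]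
    _ = Jm N * (Jm N * H * Jm N) := by simp only [Matrix.mul_assoc]
    _ = Jm N * H := by rw [hJHJ]
  have hJBJ : Jm N * H⁻¹ * Jm N = H⁻¹ := by
    refine (Matrix.inv_eq_right_inv ?_).symm
    calc H * (Jm N * H⁻¹ * Jm N) = (H * Jm N) * (H⁻¹ * Jm N) := by simp only [Matrix.mul_assoc]
    _ = Jm N * (H * H⁻¹) * Jm N := by rw [hHJ]; simp only [Matrix.mul_assoc]
    _ = 1 := by rw [hHB, Matrix.mul_one, Jm_mul_Jm]
  have hBJ : H⁻¹ * Jm N = Jm N * H⁻¹ := by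
    calc H⁻¹ * Jm N = (Jm N * Jm N) * H⁻¹ * Jm N := by rw [Jm_mul_Jm, Matrix.one_mul]
    _ = Jm N * (Jm N * H⁻¹ * Jm N) := by simp only [Matrix.mul_assoc]
    _ = Jm N * H⁻¹ := by rw [hJBJ]
  set u : Fin N → ℝ := (-(1/p)) • (H *ᵥ ((Zm N)ᵀ *ᵥ x)) with hu
  have hu1 : ∀ (j : Fin N) (hj : (j : ℕ) + 1 < N), u j = H ⟨0, hN⟩ ⟨(j : ℕ) + 1, hj⟩ := by
    intro j hj
    have hsum : (H *ᵥ ((Zm N)ᵀ *ᵥ x)) j = -(H ⟨(j : ℕ) + 1, hj⟩ ⟨0, hN⟩ * p) := by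
      rw [Matrix.mulVec_mulVec]
      show ∑ k, (H * (Zm N)ᵀ) j k * x k = _
      have step : ∀ k : Fin N, (H * (Zm N)ᵀ) j k * x k
          = (if 1 ≤ (k : ℕ) then H ⟨(j : ℕ) + 1, hj⟩ k * x k else 0) := by
        intro k
        rw [mul_Zmt_apply]
        by_cases h : 1 ≤ (k : ℕ)
        · rw [dif_pos h, if_pos h]
          have hk := k.isLt
          have heq : H j ⟨(k : ℕ) - 1, by omega⟩ = H ⟨(j : ℕ) + 1, hj⟩ k := by
            apply hT
            show (j : ℤ) - ((k : ℕ) - 1 : ℕ) = ((j : ℕ) + 1 : ℕ) - (k : ℤ)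
            omega
          rw [heq]
        · rw [dif_neg h, if_neg h, zero_mul]
      rw [Finset.sum_congr rfl fun k _ => step k,
        sum_tail hN (fun k => H ⟨(j : ℕ) + 1, hj⟩ k * x k)]
      have hHxj : ∑ k, H ⟨(j : ℕ) + 1, hj⟩ k * x k = 0 := by
        have h2 := congrFun hHx ⟨(j : ℕ) + 1, hj⟩
        have h3 : e0 ⟨(j : ℕ) + 1, hj⟩ = 0 := by
          rw [he0app]
          simp
        rw [h3] at h2
        simpa [Matrix.mulVec, dotProduct] using h2
      rw [hHxj]
      rw [hpdef]
      ring
    have huj : u j = -(1/p) * (-(H ⟨(j : ℕ) + 1, hj⟩ ⟨0, hN⟩ * p)) := by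
      rw [hu]
      simp only [Pi.smul_apply, smul_eq_mul]
      rw [hsum]
    rw [huj, show H ⟨(j : ℕ) + 1, hj⟩ ⟨0, hN⟩ = H ⟨0, hN⟩ ⟨(j : ℕ) + 1, hj⟩ from
      hSymm.apply _ _]
    field_simp
  have hK : Zm N * H - H * Zm N = vecMulVec (Jm N *ᵥ u) eL - vecMulVec e0 u := by
    ext i j
    rw [Matrix.sub_apply, Zm_mul_apply, mul_Zm_apply, Matrix.sub_apply,
      vecMulVec_apply, vecMulVec_apply, Jm_mulVec, heLapp j, he0app i]
    have hi := i.isLt; have hj := j.isLt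
    by_cases h1 : 1 ≤ (i : ℕ) <;> by_cases h2 : (j : ℕ) + 1 < N
    · rw [dif_pos h1, dif_pos h2,
        if_neg (by omega : ¬((j : ℕ) = N - 1)), if_neg (by omega : ¬((i : ℕ) = 0))]
      have heq : H ⟨(i : ℕ) - 1, by omega⟩ j = H i ⟨(j : ℕ) + 1, h2⟩ := by
        apply hT
        show ((i : ℕ) - 1 : ℕ) - (j : ℤ) = (i : ℤ) - ((j : ℕ) + 1 : ℕ)
        omega
      rw [heq]
      simp
    · rw [dif_pos h1, dif_neg h2,
        if_pos (by omega : (j : ℕ) = N - 1), if_neg (by omega : ¬((i : ℕ) = 0))]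
      have hirev : ((i.rev : Fin N) : ℕ) + 1 < N := by rw [Fin.val_rev]; omega
      rw [hu1 i.rev hirev]
      have heq : H ⟨(i : ℕ) - 1, by omega⟩ j = H ⟨0, hN⟩ ⟨(i.rev : ℕ) + 1, hirev⟩ := by
        apply hT
        show ((i : ℕ) - 1 : ℕ) - (j : ℤ) = ((0 : ℕ) : ℤ) - ((i.rev : ℕ) + 1 : ℕ)
        rw [Fin.val_rev]
        omega
      rw [heq]
      simp
    · rw [dif_neg h1, dif_pos h2,
        if_neg (by omega : ¬((j : ℕ) = N - 1)), if_pos (by omega : (i : ℕ) = 0)]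
      rw [hu1 j h2]
      have hieq : i = ⟨0, hN⟩ := Fin.ext (show (i : ℕ) = 0 by omega)
      rw [hieq]
      simp
    · rw [dif_neg h1, dif_neg h2,
        if_pos (by omega : (j : ℕ) = N - 1), if_pos (by omega : (i : ℕ) = 0)]
      have hrev : i.rev = j := by
        rw [Fin.ext_iff, Fin.val_rev]
        omega
      rw [hrev]
      simp
  have hBu : H⁻¹ *ᵥ u = (-(1/p)) • ((Zm N)ᵀ *ᵥ x) := by
    rw [hu, Matrix.mulVec_smul, Matrix.mulVec_mulVec, hBH, Matrix.one_mulVec]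
  have hZZt : Zm N * (Zm N)ᵀ = 1 - vecMulVec e0 e0 := by
    ext i j
    have hi := i.isLt; have hj := j.isLt
    have lhs : (Zm N * (Zm N)ᵀ) i j = if 1 ≤ (j : ℕ) ∧ i = j then (1:ℝ) else 0 := by
      rw [mul_Zmt_apply]
      by_cases h : 1 ≤ (j : ℕ)
      · rw [dif_pos h]
        simp only [Zm, Matrix.of_apply]
        refine if_congr ?_ rfl rfl
        rw [Fin.ext_iff]
        try simp only [Fin.val_mk]
        omega
      · rw [dif_neg h, if_neg (by tauto)]
    rw [lhs, Matrix.sub_apply, Matrix.one_apply, vecMulVec_apply, he0app i, he0app j]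
    by_cases h2 : i = j
    · subst h2
      by_cases h : 1 ≤ (i : ℕ)
      · have h0 : ¬((i : ℕ) = 0) := by omega
        simp [h, h0]
      · have h0 : (i : ℕ) = 0 := by omega
        simp [h, h0]
    · have hno : ¬(1 ≤ (j : ℕ) ∧ i = j) := by tauto
      rw [if_neg hno, if_neg h2]
      by_cases hi0 : (i : ℕ) = 0 <;> by_cases hj0 : (j : ℕ) = 0
      · exact absurd (Fin.ext (by omega)) h2
      · simp [hi0, hj0]
      · simp [hi0, hj0]
      · simp [hi0, hj0]
  have hBZsub : H⁻¹ * Zm N - Zm N * H⁻¹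
      = (-(1/p)) • vecMulVec z (Jm N *ᵥ x) + (1/p) • vecMulVec x ((Zm N)ᵀ *ᵥ x) := by
    have e1 : H⁻¹ * (Zm N * H - H * Zm N) * H⁻¹ = H⁻¹ * Zm N - Zm N * H⁻¹ := by
      rw [Matrix.mul_sub, Matrix.sub_mul]
      congr 1
      · rw [← Matrix.mul_assoc H⁻¹ (Zm N) H, Matrix.mul_assoc (H⁻¹ * Zm N) H H⁻¹,
          hHB, Matrix.mul_one]
      · rw [← Matrix.mul_assoc H⁻¹ H (Zm N), hBH, Matrix.one_mul]
    rw [← e1, hK, Matrix.mul_sub, Matrix.sub_mul,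
      mul_vecMulVec, mul_vecMulVec, vecMulVec_mul, vecMulVec_mul, hBt]
    have hJe0 : Jm N *ᵥ e0 = eL := by
      ext i
      rw [Jm_mulVec, he0app, heLapp]
      refine if_congr ?_ rfl rfl
      rw [Fin.val_rev]
      have hi := i.isLt
      omega
    have hJZt : Jm N * (Zm N)ᵀ = Zm N * Jm N := by
      calc Jm N * (Zm N)ᵀ = Jm N * (Jm N * Zm N * Jm N) := by rw [Jm_mul_Zm_mul_Jm]
      _ = (Jm N * Jm N) * Zm N * Jm N := by simp only [Matrix.mul_assoc]
      _ = Zm N * Jm N := by rw [Jm_mul_Jm, Matrix.one_mul]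
    have hBJu : H⁻¹ *ᵥ (Jm N *ᵥ u) = (-(1/p)) • z := by
      rw [Matrix.mulVec_mulVec, hBJ, ← Matrix.mulVec_mulVec, hBu, Matrix.mulVec_smul]
      congr 1
      rw [hz, Matrix.mulVec_mulVec, Matrix.mulVec_mulVec, hJZt]
    have hBs1 : H⁻¹ *ᵥ eL = Jm N *ᵥ x := by
      rw [← hJe0, Matrix.mulVec_mulVec, hBJ, ← Matrix.mulVec_mulVec, hBe0]
    rw [hBJu, hBs1, hBe0, hBu, smul_vecMulVec, vecMulVec_smul]
    simp only [neg_smul, sub_neg_eq_add]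
  have hdispB : H⁻¹ - Zm N * H⁻¹ * (Zm N)ᵀ = (1/p) • (vecMulVec x x - vecMulVec z z) := by
    have e3 : H⁻¹ * Zm N * (Zm N)ᵀ = H⁻¹ - vecMulVec x e0 := by
      rw [Matrix.mul_assoc, hZZt, Matrix.mul_sub, Matrix.mul_one, mul_vecMulVec, hBe0]
    have e2 : H⁻¹ - Zm N * H⁻¹ * (Zm N)ᵀ
        = vecMulVec x e0 + (H⁻¹ * Zm N - Zm N * H⁻¹) * (Zm N)ᵀ := by
      rw [Matrix.sub_mul, e3]
      abel
    rw [e2, hBZsub, Matrix.add_mul, Matrix.smul_mul, Matrix.smul_mul,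
      vecMulVec_mul, vecMulVec_mul, Matrix.transpose_transpose]
    have e4 : Zm N *ᵥ ((Zm N)ᵀ *ᵥ x) = x - p • e0 := by
      rw [Matrix.mulVec_mulVec, hZZt, Matrix.sub_mulVec, Matrix.one_mulVec, vecMulVec_mulVec]
      congr 1
      rw [he0, single_dotProduct, one_mul, hpdef]
    rw [← hz, e4, vecMulVec_sub, vecMulVec_smul]
    rw [smul_sub, smul_sub, smul_smul]
    have hc : (1/p) * p = 1 := by field_simp
    rw [hc, one_smul]
    simp only [neg_smul]
    abel
  have hZLL : ∀ a : Fin N → ℝ,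
      Zm N * (Lm a * (Lm a)ᵀ) * (Zm N)ᵀ = Lm a * (Lm a)ᵀ - vecMulVec a a := by
    intro a
    calc Zm N * (Lm a * (Lm a)ᵀ) * (Zm N)ᵀ
        = (Zm N * Lm a) * ((Zm N * Lm a)ᵀ) := by
          rw [Matrix.transpose_mul]; simp only [Matrix.mul_assoc]
      _ = (Lm a * Zm N) * ((Lm a * Zm N)ᵀ) := by rw [Zm_mul_Lm_comm]
      _ = Lm a * (Zm N * (Zm N)ᵀ) * (Lm a)ᵀ := by
          rw [Matrix.transpose_mul]; simp only [Matrix.mul_assoc]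
      _ = Lm a * (Lm a)ᵀ - vecMulVec a a := by
          rw [hZZt, Matrix.mul_sub, Matrix.mul_one, Matrix.sub_mul,
            mul_vecMulVec, vecMulVec_mul, Matrix.transpose_transpose,
            Lm_mulVec_single a hN]
  have hGS : p • H⁻¹ = Lm x * (Lm x)ᵀ - Lm z * (Lm z)ᵀ := by
    have e6 : Zm N * H⁻¹ * (Zm N)ᵀ = H⁻¹ - (1/p) • (vecMulVec x x - vecMulVec z z) := by
      rw [← hdispB]; abel
    have hD : (p • H⁻¹ - (Lm x * (Lm x)ᵀ - Lm z * (Lm z)ᵀ))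
        = Zm N * (p • H⁻¹ - (Lm x * (Lm x)ᵀ - Lm z * (Lm z)ᵀ)) * (Zm N)ᵀ := by
      rw [Matrix.mul_sub, Matrix.sub_mul, Matrix.mul_sub, Matrix.sub_mul,
        Matrix.mul_smul, Matrix.smul_mul, hZLL x, hZLL z, e6]
      rw [smul_sub, smul_smul]
      have hc : p * (1/p) = 1 := by field_simp
      rw [hc, one_smul]
      abel
    have hD0 := disp_eq_zero _ hD
    exact sub_eq_zero.mp hD0
  have hGS2 : p • H⁻¹ = (Lm x)ᵀ * Lm x - (Lm z)ᵀ * Lm z := by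
    have hfix : Jm N * (p • H⁻¹) * Jm N = p • H⁻¹ := by
      rw [Matrix.mul_smul, Matrix.smul_mul, hJBJ]
    calc p • H⁻¹ = Jm N * (p • H⁻¹) * Jm N := hfix.symm
    _ = Jm N * (Lm x * (Lm x)ᵀ - Lm z * (Lm z)ᵀ) * Jm N := by rw [← hGS]
    _ = (Lm x)ᵀ * Lm x - (Lm z)ᵀ * Lm z := by
        rw [Matrix.mul_sub, Matrix.sub_mul]
        congr 1
        · rw [Jm_conj_mul, Jm_mul_Lm_mul_Jm,
            Jm_mul_transpose_mul_Jm (Lm x) (Jm_mul_Lm_mul_Jm x)]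
        · rw [Jm_conj_mul, Jm_mul_Lm_mul_Jm,
            Jm_mul_transpose_mul_Jm (Lm z) (Jm_mul_Lm_mul_Jm z)]
  have hJCSJ : Jm N * ((Lm x + (Lm z)ᵀ) * ((Lm x)ᵀ - Lm z)) * Jm N
      = ((Lm x)ᵀ + Lm z) * (Lm x - (Lm z)ᵀ) := by
    rw [Jm_conj_mul]
    congr 1
    · rw [Matrix.mul_add, Matrix.add_mul, Jm_mul_Lm_mul_Jm,
        Jm_mul_transpose_mul_Jm (Lm z) (Jm_mul_Lm_mul_Jm z)]
    · rw [Matrix.mul_sub, Matrix.sub_mul, Jm_mul_Lm_mul_Jm,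
        Jm_mul_transpose_mul_Jm (Lm x) (Jm_mul_Lm_mul_Jm x)]
  rw [hJCSJ]
  have h2p : (2 * p) • H⁻¹ = p • H⁻¹ + p • H⁻¹ := by
    rw [two_mul, add_smul]
  rw [h2p]
  nth_rewrite 1 [hGS]
  nth_rewrite 1 [hGS2]
  have hc1 : Lm z * Lm x = Lm x * Lm z := Lm_mul_comm z x
  have hc2 : (Lm z)ᵀ * (Lm x)ᵀ = (Lm x)ᵀ * (Lm z)ᵀ := by
    rw [← Matrix.transpose_mul, ← Matrix.transpose_mul, hc1]
  simp only [Matrix.add_mul, Matrix.mul_sub]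
  rw [hc1, hc2]
  abel

end GS

set_option maxHeartbeats 1600000 in
theorem stmt_9 (N : ℕ) (hN : 0 < N)
    (H : Matrix (Fin N) (Fin N) ℝ)
    (hToep : ∃ t : ℤ → ℝ, ∀ i j : Fin N, H i j = t ((i : ℤ) - (j : ℤ)))
    (hSymm : H.IsSymm) (hPD : H.PosDef)
    (c : Fin N → ℝ) (hc : c = H⁻¹ *ᵥ Pi.single ⟨0, hN⟩ 1)
    (J : Matrix (Fin N) (Fin N) ℝ)
    (hJ : ∀ i j : Fin N, J i j = if (i : ℕ) + (j : ℕ) = N - 1 then 1 else 0)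
    (C : Matrix (Fin N) (Fin N) ℝ) (hC : C = Matrix.circulant c)
    (s : Fin N → ℝ) (hs : ∀ k : Fin N, s k = if k = ⟨0, hN⟩ then c ⟨0, hN⟩ else -c (-k))
    (S : Matrix (Fin N) (Fin N) ℝ)
    (hS : ∀ j k : Fin N, S j k = if (k : ℕ) ≤ (j : ℕ) then s (j - k) else -s (j - k))
    (v : Fin N → ℝ)
    (vhat : Fin N → ℂ)
    (hvhat : vhat = fun k =>
      (1 / (2 * (c ⟨0, hN⟩ : ℂ))) *
        (((C.map Complex.ofReal * S.map Complex.ofReal) *ᵥ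
          fun l => (v l : ℂ) + Complex.I * ((J *ᵥ v) l : ℂ)) k)) :
    H⁻¹ *ᵥ v = fun k => (vhat k).re + (J *ᵥ fun l => (vhat l).im) k := by
  obtain ⟨t, ht⟩ := hToep
  have hT : ∀ i j k l : Fin N, (i : ℤ) - (j : ℤ) = (k : ℤ) - (l : ℤ) → H i j = H k l := by
    intro i j k l hd
    rw [ht, ht, hd]
  have hp : 0 < c ⟨0, hN⟩ := by
    have hinv := hPD.inv
    have he0ne : (Pi.single (⟨0, hN⟩ : Fin N) 1 : Fin N → ℝ) ≠ 0 := by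
      intro hc0
      have := congrFun hc0 ⟨0, hN⟩
      simp at this
    have h1 := hinv.dotProduct_mulVec_pos he0ne
    have h1' : (0:ℝ) < (Pi.single (⟨0, hN⟩ : Fin N) (1:ℝ)) ⬝ᵥ (H⁻¹ *ᵥ Pi.single ⟨0, hN⟩ 1) := by
      simpa using h1
    rw [← hc] at h1'
    simpa [single_dotProduct] using h1'
  have hpne : c ⟨0, hN⟩ ≠ 0 := ne_of_gt hp
  set z : Fin N → ℝ := GS.Zm N *ᵥ (GS.Jm N *ᵥ c) with hzdef
  have hJm : J = GS.Jm N := by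
    ext i j
    rw [hJ]
    show _ = if j = i.rev then 1 else 0
    refine if_congr ?_ rfl rfl
    rw [Fin.ext_iff, Fin.val_rev]
    have hi := i.isLt; have hj := j.isLt
    omega
  have hzapp : ∀ k : Fin N, z k = if h : 1 ≤ (k : ℕ) then c ⟨N - (k : ℕ), by omega⟩ else 0 := by
    intro k
    rw [hzdef, GS.Zm_mulVec]
    by_cases h : 1 ≤ (k : ℕ)
    · rw [dif_pos h, dif_pos h, GS.Jm_mulVec]
      congr 1
      rw [Fin.ext_iff, Fin.val_rev]
      have := k.isLt
      try simp only [Fin.val_mk]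
      omega
    · rw [dif_neg h, dif_neg h]
  have hCdec : C = GS.Lm c + (GS.Lm z)ᵀ := by
    ext i j
    rw [hC, Matrix.circulant_apply, Matrix.add_apply, Matrix.transpose_apply,
      GS.Lm_apply, GS.Lm_apply]
    have hi := i.isLt; have hj := j.isLt
    have hsub := GS.Fin_sub_val i j
    by_cases h : (j : ℕ) ≤ (i : ℕ)
    · rw [dif_pos h]
      have hidx : i - j = (⟨(i : ℕ) - (j : ℕ), by omega⟩ : Fin N) :=
        Fin.ext (by rw [hsub, if_pos h])
      rw [hidx]
      by_cases h2 : (i : ℕ) ≤ (j : ℕ)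
      · rw [dif_pos h2, hzapp]
        rw [dif_neg (by try simp only [Fin.val_mk]; omega), add_zero]
      · rw [dif_neg h2, add_zero]
    · rw [dif_neg h, dif_pos (by omega : (i : ℕ) ≤ (j : ℕ)), hzapp, zero_add]
      rw [dif_pos (by try simp only [Fin.val_mk]; omega)]
      congr 1
      rw [Fin.ext_iff]
      rw [hsub, if_neg h]
      try simp only [Fin.val_mk]
      omega
  have hSdec : S = (GS.Lm c)ᵀ - GS.Lm z := by
    ext j k
    rw [hS j k, Matrix.sub_apply, Matrix.transpose_apply, GS.Lm_apply, GS.Lm_apply]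
    have hj := j.isLt; have hk := k.isLt
    have hsub := GS.Fin_sub_val j k
    have hneg := GS.Fin_neg_val hN (j - k)
    by_cases h : (k : ℕ) ≤ (j : ℕ)
    · rw [if_pos h, hs]
      by_cases h2 : (j : ℕ) = (k : ℕ)
      · have hjk : j - k = ⟨0, hN⟩ := Fin.ext (by rw [hsub, if_pos h]; try simp only [Fin.val_mk]; omega)
        rw [if_pos hjk, dif_pos (by omega : (j : ℕ) ≤ (k : ℕ)), dif_pos h, hzapp]
        rw [dif_neg (by try simp only [Fin.val_mk]; omega)]
        rw [sub_zero]
        congr 1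
        rw [Fin.ext_iff]
        try simp only [Fin.val_mk]
        omega
      · have hjkv : ((j - k : Fin N) : ℕ) = (j : ℕ) - (k : ℕ) := by rw [hsub, if_pos h]
        have hne : j - k ≠ ⟨0, hN⟩ := by
          rw [Fin.ne_iff_vne, hjkv]
          try simp only [Fin.val_mk]
          omega
        rw [if_neg hne, dif_neg (by omega : ¬((j : ℕ) ≤ (k : ℕ))), dif_pos h, hzapp]
        rw [dif_pos (by try simp only [Fin.val_mk]; omega)]
        rw [zero_sub]
        have hnegv : ((-(j - k) : Fin N) : ℕ) = N - ((j - k : Fin N) : ℕ) := by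
          rw [hneg, if_neg hne]
        congr 2
        rw [Fin.ext_iff]
        try simp only [Fin.val_mk]
        omega
    · rw [if_neg h, hs]
      have hjkv : ((j - k : Fin N) : ℕ) = N + (j : ℕ) - (k : ℕ) := by rw [hsub, if_neg h]
      have hne : j - k ≠ ⟨0, hN⟩ := by
        rw [Fin.ne_iff_vne, hjkv]
        try simp only [Fin.val_mk]
        omega
      rw [if_neg hne, dif_pos (by omega : (j : ℕ) ≤ (k : ℕ)), dif_neg (by omega : ¬((k : ℕ) ≤ (j : ℕ)))]
      rw [neg_neg, sub_zero]
      have hnegv : ((-(j - k) : Fin N) : ℕ) = N - ((j - k : Fin N) : ℕ) := by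
        rw [hneg, if_neg hne]
      congr 1
      rw [Fin.ext_iff]
      try simp only [Fin.val_mk]
      omega
  have key : C * S + J * (C * S) * J = (2 * c ⟨0, hN⟩) • H⁻¹ := by
    rw [hCdec, hSdec, hJm]
    exact GS.gs_main hN H hT hSymm hPD c hc z hzdef
  set w1 : Fin N → ℝ := (C * S) *ᵥ v with hw1
  set w2 : Fin N → ℝ := (C * S) *ᵥ (J *ᵥ v) with hw2
  have hkey2 : w1 + J *ᵥ w2 = (2 * c ⟨0, hN⟩) • (H⁻¹ *ᵥ v) := by
    have h0 := congrArg (fun M => M *ᵥ v) key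
    simpa [hw1, hw2, Matrix.add_mulVec, ← Matrix.mulVec_mulVec,
      Matrix.smul_mulVec] using h0
  have hmap : C.map Complex.ofReal * S.map Complex.ofReal = (C * S).map Complex.ofReal := by
    ext i j
    simp only [Matrix.mul_apply, Matrix.map_apply]
    push_cast
    rfl
  have hvh : ∀ k, vhat k = ((1 / (2 * c ⟨0, hN⟩) * w1 k : ℝ) : ℂ)
      + Complex.I * ((1 / (2 * c ⟨0, hN⟩) * w2 k : ℝ) : ℂ) := by
    intro k
    simp only [hvhat]
    rw [hmap]
    have expand : (((C * S).map Complex.ofReal) *ᵥ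
        fun l => (v l : ℂ) + Complex.I * ((J *ᵥ v) l : ℂ)) k
        = ((w1 k : ℝ) : ℂ) + Complex.I * ((w2 k : ℝ) : ℂ) := by
      have hunf : (((C * S).map Complex.ofReal) *ᵥ
          fun l => (v l : ℂ) + Complex.I * ((J *ᵥ v) l : ℂ)) k
          = ∑ l : Fin N, ((C * S) k l : ℂ) * ((v l : ℂ) + Complex.I * ((J *ᵥ v) l : ℂ)) := rfl
      rw [hunf]
      have step : ∀ l : Fin N, ((C * S) k l : ℂ) * ((v l : ℂ) + Complex.I * ((J *ᵥ v) l : ℂ))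
          = ((((C * S) k l * v l : ℝ)) : ℂ)
            + Complex.I * ((((C * S) k l * (J *ᵥ v) l : ℝ)) : ℂ) := by
        intro l
        push_cast
        ring
      rw [Finset.sum_congr rfl fun l _ => step l, Finset.sum_add_distrib,
        ← Complex.ofReal_sum, ← Finset.mul_sum, ← Complex.ofReal_sum]
      rfl
    rw [expand]
    push_cast
    ring
  have hre : ∀ k, (vhat k).re = 1 / (2 * c ⟨0, hN⟩) * w1 k := by
    intro k; rw [hvh k]; simp
  have him : ∀ k, (vhat k).im = 1 / (2 * c ⟨0, hN⟩) * w2 k := by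
    intro k; rw [hvh k]; simp
  funext k
  rw [hre k]
  have himf : (fun l => (vhat l).im) = fun l => 1 / (2 * c ⟨0, hN⟩) * w2 l := funext him
  rw [himf]
  have hJsmul : (J *ᵥ fun l => 1 / (2 * c ⟨0, hN⟩) * w2 l) k
      = 1 / (2 * c ⟨0, hN⟩) * (J *ᵥ w2) k := by
    have hfn : (fun l => 1 / (2 * c ⟨0, hN⟩) * w2 l) = (1 / (2 * c ⟨0, hN⟩)) • w2 := rfl
    rw [hfn, Matrix.mulVec_smul]
    simp
  rw [hJsmul]
  have hk2 := congrFun hkey2 k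
  simp only [Pi.add_apply, Pi.smul_apply, smul_eq_mul] at hk2
  have h2c : (2 : ℝ) * c ⟨0, hN⟩ ≠ 0 := mul_ne_zero two_ne_zero hpne
  rw [← mul_add, hk2, ← mul_assoc, one_div_mul_cancel h2c, one_mul]
end

section
/- Let W_h be the space of grid functions w = {w_{ij}}, vanishing outside the index set {1,...,N}², with inner product ⟨w₁,w₂⟩ = h² Σ_{i,j=1}^N (w₁)_{ij}(w₂)_{ij}. Let A denote the matrix of the discrete fractional Laplacian L_h^α with symbol (4sin²η/2 + 4sin²ξ/2)^{α/2}, and à the matrix of δ_x^α + δ_y^α with symbol (4sin²η/2)^{α/2} + (4sin²ξ/2)^{α/2}. Then for every w ∈ W_h and α ∈ (1,2), ⟨Aw, w⟩ ≤ ⟨Ãw, w⟩, i.e. ‖w‖_A² ≤ ‖w‖_Ã². -/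
open Real Complex MeasureTheory intervalIntegral

lemma rpow_subadd {a b p : ℝ} (ha : 0 ≤ a) (hb : 0 ≤ b) (hp : 0 ≤ p) (hp1 : p ≤ 1) :
    (a + b) ^ p ≤ a ^ p + b ^ p := by
  have h := NNReal.rpow_add_le_add_rpow a.toNNReal b.toNNReal hp hp1
  rw [← Real.toNNReal_add ha hb] at h
  have h2 := NNReal.coe_le_coe.2 h
  simpa only [NNReal.coe_add, NNReal.coe_rpow, Real.coe_toNNReal _ ha, Real.coe_toNNReal _ hb,
    Real.coe_toNNReal _ (add_nonneg ha hb)] using h2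

noncomputable def E (p : ℤ × ℤ) (η ξ : ℝ) : ℂ :=
  Complex.exp (-Complex.I * ((p.1 : ℂ) * η + (p.2 : ℂ) * ξ))

lemma cont_E (p : ℤ × ℤ) : Continuous fun x : ℝ × ℝ => E p x.1 x.2 := by
  unfold E; fun_prop

lemma conj_E (p : ℤ × ℤ) (η ξ : ℝ) :
    (starRingEnd ℂ) (E p η ξ) = Complex.exp (Complex.I * ((p.1 : ℂ) * η + (p.2 : ℂ) * ξ)) := by
  rw [E, ← Complex.exp_conj]
  congr 1
  simp [map_mul, map_add, Complex.conj_ofReal]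

lemma E_mul_conj_E (p q : ℤ × ℤ) (η ξ : ℝ) :
    E p η ξ * (starRingEnd ℂ) (E q η ξ) =
      Complex.exp (-Complex.I * (((p.1 - q.1 : ℤ) : ℂ) * η + ((p.2 - q.2 : ℤ) : ℂ) * ξ)) := by
  rw [conj_E, E, ← Complex.exp_add]
  congr 1
  push_cast
  ring

noncomputable def S (F : Finset (ℤ × ℤ)) (w : ℤ × ℤ → ℝ) (η ξ : ℝ) : ℂ :=
  ∑ p ∈ F, (w p : ℂ) * E p η ξ

lemma cont_S (F : Finset (ℤ × ℤ)) (w : ℤ × ℤ → ℝ) :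
    Continuous fun x : ℝ × ℝ => S F w x.1 x.2 := by
  unfold S
  exact continuous_finset_sum _ fun p _ => continuous_const.mul (cont_E p)

lemma normsq_S (F : Finset (ℤ × ℤ)) (w : ℤ × ℤ → ℝ) (η ξ : ℝ) :
    ((‖S F w η ξ‖ ^ 2 : ℝ) : ℂ) = S F w η ξ * (starRingEnd ℂ) (S F w η ξ) := by
  rw [Complex.mul_conj, Complex.normSq_eq_norm_sq]

lemma pointwise_sum (g : ℝ → ℝ → ℝ) (F : Finset (ℤ × ℤ)) (w : ℤ × ℤ → ℝ) (η ξ : ℝ) :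
    ∑ z ∈ F ×ˢ F, ((w z.1 * w z.2 : ℝ) : ℂ) *
      (((g η ξ : ℝ) : ℂ) *
        Complex.exp (-Complex.I * (((z.1.1 - z.2.1 : ℤ) : ℂ) * η + ((z.1.2 - z.2.2 : ℤ) : ℂ) * ξ)))
    = ((g η ξ * ‖S F w η ξ‖ ^ 2 : ℝ) : ℂ) := by
  rw [Complex.ofReal_mul, normsq_S]
  rw [S, map_sum, Finset.sum_mul_sum, Finset.mul_sum]
  simp_rw [Finset.mul_sum]
  rw [← Finset.sum_product']
  apply Finset.sum_congr rfl
  intro z _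
  rw [map_mul, Complex.conj_ofReal, ← E_mul_conj_E]
  push_cast
  ring

lemma swap_sum_integral (g : ℝ → ℝ → ℝ) (hg : Continuous fun x : ℝ × ℝ => g x.1 x.2)
    (F : Finset (ℤ × ℤ)) (w : ℤ × ℤ → ℝ) :
    ∑ z ∈ F ×ˢ F, ((w z.1 * w z.2 : ℝ) : ℂ) *
        ∫ η in (-π)..π, ∫ ξ in (-π)..π, ((g η ξ : ℝ) : ℂ) *
          Complex.exp (-Complex.I * (((z.1.1 - z.2.1 : ℤ) : ℂ) * η + ((z.1.2 - z.2.2 : ℤ) : ℂ) * ξ))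
      = ((∫ η in (-π)..π, ∫ ξ in (-π)..π, g η ξ * ‖S F w η ξ‖ ^ 2 : ℝ) : ℂ) := by
  have hc : ∀ i j : ℤ, Continuous fun x : ℝ × ℝ => ((g x.1 x.2 : ℝ) : ℂ) *
      Complex.exp (-Complex.I * ((i : ℂ) * x.1 + (j : ℂ) * x.2)) :=
    fun i j => (Complex.continuous_ofReal.comp hg).mul (cont_E (i, j))
  have hc' : ∀ i j : ℤ, Continuous (Function.uncurry fun η ξ : ℝ => ((g η ξ : ℝ) : ℂ) *
      Complex.exp (-Complex.I * ((i : ℂ) * η + (j : ℂ) * ξ))) := hc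
  have hparam : ∀ i j : ℤ, Continuous fun η : ℝ => ∫ ξ in (-π)..π,
      ((g η ξ : ℝ) : ℂ) * Complex.exp (-Complex.I * ((i : ℂ) * η + (j : ℂ) * ξ)) := by
    intro i j
    exact continuous_parametric_intervalIntegral_of_continuous' (hc' i j) (-π) π
  have inner_eq : ∀ η : ℝ,
      ∑ z ∈ F ×ˢ F, ((w z.1 * w z.2 : ℝ) : ℂ) * ∫ ξ in (-π)..π, ((g η ξ : ℝ) : ℂ) *
          Complex.exp (-Complex.I * (((z.1.1 - z.2.1 : ℤ) : ℂ) * η + ((z.1.2 - z.2.2 : ℤ) : ℂ) * ξ))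
        = ((∫ ξ in (-π)..π, g η ξ * ‖S F w η ξ‖ ^ 2 : ℝ) : ℂ) := by
    intro η
    calc ∑ z ∈ F ×ˢ F, ((w z.1 * w z.2 : ℝ) : ℂ) * ∫ ξ in (-π)..π, ((g η ξ : ℝ) : ℂ) *
          Complex.exp (-Complex.I * (((z.1.1 - z.2.1 : ℤ) : ℂ) * η + ((z.1.2 - z.2.2 : ℤ) : ℂ) * ξ))
        = ∑ z ∈ F ×ˢ F, ∫ ξ in (-π)..π, ((w z.1 * w z.2 : ℝ) : ℂ) * (((g η ξ : ℝ) : ℂ) *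
          Complex.exp (-Complex.I * (((z.1.1 - z.2.1 : ℤ) : ℂ) * η + ((z.1.2 - z.2.2 : ℤ) : ℂ) * ξ))) := by
          simp_rw [intervalIntegral.integral_const_mul]
      _ = ∫ ξ in (-π)..π, ∑ z ∈ F ×ˢ F, ((w z.1 * w z.2 : ℝ) : ℂ) * (((g η ξ : ℝ) : ℂ) *
          Complex.exp (-Complex.I * (((z.1.1 - z.2.1 : ℤ) : ℂ) * η + ((z.1.2 - z.2.2 : ℤ) : ℂ) * ξ))) := by
          refine (intervalIntegral.integral_finset_sum fun z _ => ?_).symm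
          exact (continuous_const.mul (((hc (z.1.1 - z.2.1) (z.1.2 - z.2.2))).comp (Continuous.prodMk_right η))).intervalIntegrable (-π) π
      _ = ∫ ξ in (-π)..π, ((g η ξ * ‖S F w η ξ‖ ^ 2 : ℝ) : ℂ) := by
          simp_rw [pointwise_sum]
      _ = ((∫ ξ in (-π)..π, g η ξ * ‖S F w η ξ‖ ^ 2 : ℝ) : ℂ) := intervalIntegral.integral_ofReal
  calc ∑ z ∈ F ×ˢ F, ((w z.1 * w z.2 : ℝ) : ℂ) *
        ∫ η in (-π)..π, ∫ ξ in (-π)..π, ((g η ξ : ℝ) : ℂ) *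
          Complex.exp (-Complex.I * (((z.1.1 - z.2.1 : ℤ) : ℂ) * η + ((z.1.2 - z.2.2 : ℤ) : ℂ) * ξ))
      = ∑ z ∈ F ×ˢ F, ∫ η in (-π)..π, ((w z.1 * w z.2 : ℝ) : ℂ) * ∫ ξ in (-π)..π, ((g η ξ : ℝ) : ℂ) *
          Complex.exp (-Complex.I * (((z.1.1 - z.2.1 : ℤ) : ℂ) * η + ((z.1.2 - z.2.2 : ℤ) : ℂ) * ξ)) := by
        simp_rw [intervalIntegral.integral_const_mul]
    _ = ∫ η in (-π)..π, ∑ z ∈ F ×ˢ F, ((w z.1 * w z.2 : ℝ) : ℂ) * ∫ ξ in (-π)..π, ((g η ξ : ℝ) : ℂ) *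
          Complex.exp (-Complex.I * (((z.1.1 - z.2.1 : ℤ) : ℂ) * η + ((z.1.2 - z.2.2 : ℤ) : ℂ) * ξ)) := by
        refine (intervalIntegral.integral_finset_sum fun z _ => ?_).symm
        exact (continuous_const.mul (hparam (z.1.1 - z.2.1) (z.1.2 - z.2.2))).intervalIntegrable (-π) π
    _ = ∫ η in (-π)..π, ((∫ ξ in (-π)..π, g η ξ * ‖S F w η ξ‖ ^ 2 : ℝ) : ℂ) := by
        simp_rw [inner_eq]
    _ = ((∫ η in (-π)..π, ∫ ξ in (-π)..π, g η ξ * ‖S F w η ξ‖ ^ 2 : ℝ) : ℂ) :=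
        intervalIntegral.integral_ofReal

lemma key (g : ℝ → ℝ → ℝ) (hg : Continuous fun x : ℝ × ℝ => g x.1 x.2)
    (F : Finset (ℤ × ℤ)) (w : ℤ × ℤ → ℝ) :
    ∑ p ∈ F, (∑ q ∈ F, ((1 / (4 * (π : ℂ) ^ 2)) *
        ∫ η in (-π)..π, ∫ ξ in (-π)..π, ((g η ξ : ℝ) : ℂ) *
          Complex.exp (-Complex.I * (((p.1 - q.1 : ℤ) : ℂ) * η + ((p.2 - q.2 : ℤ) : ℂ) * ξ))).re
        * w q) * w p
    = (1 / (4 * π ^ 2)) * ∫ η in (-π)..π, ∫ ξ in (-π)..π, g η ξ * ‖S F w η ξ‖ ^ 2 := by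
  simp_rw [Finset.sum_mul]
  rw [← Finset.sum_product']
  have hterm : ∀ z : (ℤ × ℤ) × (ℤ × ℤ),
      ((1 / (4 * (π : ℂ) ^ 2)) *
        ∫ η in (-π)..π, ∫ ξ in (-π)..π, ((g η ξ : ℝ) : ℂ) *
          Complex.exp (-Complex.I * (((z.1.1 - z.2.1 : ℤ) : ℂ) * η + ((z.1.2 - z.2.2 : ℤ) : ℂ) * ξ))).re
        * w z.2 * w z.1
      = (((w z.1 * w z.2 : ℝ) : ℂ) * ((1 / (4 * (π : ℂ) ^ 2)) *
        ∫ η in (-π)..π, ∫ ξ in (-π)..π, ((g η ξ : ℝ) : ℂ) *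
          Complex.exp (-Complex.I * (((z.1.1 - z.2.1 : ℤ) : ℂ) * η + ((z.1.2 - z.2.2 : ℤ) : ℂ) * ξ)))).re := by
    intro z
    rw [Complex.re_ofReal_mul]
    ring
  simp_rw [hterm]
  rw [← Complex.re_sum]
  have hmul : (∑ z ∈ F ×ˢ F, ((w z.1 * w z.2 : ℝ) : ℂ) * ((1 / (4 * (π : ℂ) ^ 2)) *
        ∫ η in (-π)..π, ∫ ξ in (-π)..π, ((g η ξ : ℝ) : ℂ) *
          Complex.exp (-Complex.I * (((z.1.1 - z.2.1 : ℤ) : ℂ) * η + ((z.1.2 - z.2.2 : ℤ) : ℂ) * ξ))))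
      = (1 / (4 * (π : ℂ) ^ 2)) * ∑ z ∈ F ×ˢ F, ((w z.1 * w z.2 : ℝ) : ℂ) *
        ∫ η in (-π)..π, ∫ ξ in (-π)..π, ((g η ξ : ℝ) : ℂ) *
          Complex.exp (-Complex.I * (((z.1.1 - z.2.1 : ℤ) : ℂ) * η + ((z.1.2 - z.2.2 : ℤ) : ℂ) * ξ)) := by
    rw [Finset.mul_sum]
    exact Finset.sum_congr rfl fun z _ => by ring
  rw [hmul, swap_sum_integral g hg F w]
  have hcc : (1 / (4 * (π : ℂ) ^ 2)) = ((1 / (4 * π ^ 2) : ℝ) : ℂ) := by push_cast; ring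
  rw [hcc, ← Complex.ofReal_mul, Complex.ofReal_re]

theorem stmt_11 (α h : ℝ) (hα1 : 1 < α) (hα2 : α < 2) (hh : 0 < h) (N : ℕ)
    (w : ℤ × ℤ → ℝ)
    (hw : ∀ p : ℤ × ℤ, (p.1 < 1 ∨ (N : ℤ) < p.1 ∨ p.2 < 1 ∨ (N : ℤ) < p.2) → w p = 0)
    (aA : ℤ → ℤ → ℝ)
    (haA : ∀ i j : ℤ, aA i j = ((1 / (4 * (π : ℂ) ^ 2)) *
      ∫ η in (-π)..π, ∫ ξ in (-π)..π,
        (((4 * Real.sin (η / 2) ^ 2 + 4 * Real.sin (ξ / 2) ^ 2) ^ (α / 2) : ℝ) : ℂ)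
          * Complex.exp (-Complex.I * (i * η + j * ξ))).re)
    (aT : ℤ → ℤ → ℝ)
    (haT : ∀ i j : ℤ, aT i j = ((1 / (4 * (π : ℂ) ^ 2)) *
      ∫ η in (-π)..π, ∫ ξ in (-π)..π,
        ((((4 * Real.sin (η / 2) ^ 2) ^ (α / 2) + (4 * Real.sin (ξ / 2) ^ 2) ^ (α / 2) : ℝ)) : ℂ)
          * Complex.exp (-Complex.I * (i * η + j * ξ))).re) :
    h ^ 2 * ∑' p : ℤ × ℤ, (∑' q : ℤ × ℤ, aA (p.1 - q.1) (p.2 - q.2) * w q) * w p ≤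
      h ^ 2 * ∑' p : ℤ × ℤ, (∑' q : ℤ × ℤ, aT (p.1 - q.1) (p.2 - q.2) * w q) * w p := by
  set F : Finset (ℤ × ℤ) := Finset.Icc (1 : ℤ) (N : ℤ) ×ˢ Finset.Icc (1 : ℤ) (N : ℤ) with hF
  have hsupp : ∀ p : ℤ × ℤ, p ∉ F → w p = 0 := by
    intro p hp
    apply hw p
    simp only [hF, Finset.mem_product, Finset.mem_Icc] at hp
    omega
  -- reduce tsums to finite sums
  have hred : ∀ a : ℤ → ℤ → ℝ,
      (∑' p : ℤ × ℤ, (∑' q : ℤ × ℤ, a (p.1 - q.1) (p.2 - q.2) * w q) * w p)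
        = ∑ p ∈ F, (∑ q ∈ F, a (p.1 - q.1) (p.2 - q.2) * w q) * w p := by
    intro a
    rw [tsum_eq_sum (s := F) (fun p hp => by rw [hsupp p hp, mul_zero])]
    exact Finset.sum_congr rfl fun p _ => by
      rw [tsum_eq_sum (s := F) (fun q hq => by rw [hsupp q hq, mul_zero])]
  rw [hred aA, hred aT]
  have hα0 : (0:ℝ) ≤ α / 2 := by linarith
  have hα1' : α / 2 ≤ 1 := by linarith
  have hrc : Continuous fun t : ℝ => t ^ (α / 2) := by
    rw [continuous_iff_continuousAt]
    intro t
    exact Real.continuousAt_rpow_const t _ (Or.inr (by linarith))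
  have hbase : Continuous fun x : ℝ × ℝ => 4 * Real.sin (x.1 / 2) ^ 2 + 4 * Real.sin (x.2 / 2) ^ 2 := by
    fun_prop
  have hgA : Continuous fun x : ℝ × ℝ =>
      (4 * Real.sin (x.1 / 2) ^ 2 + 4 * Real.sin (x.2 / 2) ^ 2) ^ (α / 2) := hrc.comp hbase
  have hgT : Continuous fun x : ℝ × ℝ =>
      (4 * Real.sin (x.1 / 2) ^ 2) ^ (α / 2) + (4 * Real.sin (x.2 / 2) ^ 2) ^ (α / 2) :=
    (hrc.comp (by fun_prop)).add (hrc.comp (by fun_prop))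
  simp_rw [haA, haT]
  rw [key (fun η ξ => (4 * Real.sin (η / 2) ^ 2 + 4 * Real.sin (ξ / 2) ^ 2) ^ (α / 2)) hgA F w,
      key (fun η ξ => (4 * Real.sin (η / 2) ^ 2) ^ (α / 2) + (4 * Real.sin (ξ / 2) ^ 2) ^ (α / 2)) hgT F w]
  have hptwise : ∀ η ξ : ℝ,
      (4 * Real.sin (η / 2) ^ 2 + 4 * Real.sin (ξ / 2) ^ 2) ^ (α / 2) * ‖S F w η ξ‖ ^ 2
        ≤ ((4 * Real.sin (η / 2) ^ 2) ^ (α / 2) + (4 * Real.sin (ξ / 2) ^ 2) ^ (α / 2)) * ‖S F w η ξ‖ ^ 2 := by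
    intro η ξ
    apply mul_le_mul_of_nonneg_right _ (sq_nonneg _)
    exact rpow_subadd (by positivity) (by positivity) hα0 hα1'
  have hprodA : Continuous fun x : ℝ × ℝ =>
      (4 * Real.sin (x.1 / 2) ^ 2 + 4 * Real.sin (x.2 / 2) ^ 2) ^ (α / 2) * ‖S F w x.1 x.2‖ ^ 2 :=
    hgA.mul ((cont_S F w).norm.pow 2)
  have hprodT : Continuous fun x : ℝ × ℝ =>
      ((4 * Real.sin (x.1 / 2) ^ 2) ^ (α / 2) + (4 * Real.sin (x.2 / 2) ^ 2) ^ (α / 2)) * ‖S F w x.1 x.2‖ ^ 2 :=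
    hgT.mul ((cont_S F w).norm.pow 2)
  have hintle : (∫ η in (-π)..π, ∫ ξ in (-π)..π,
        (4 * Real.sin (η / 2) ^ 2 + 4 * Real.sin (ξ / 2) ^ 2) ^ (α / 2) * ‖S F w η ξ‖ ^ 2)
      ≤ ∫ η in (-π)..π, ∫ ξ in (-π)..π,
        ((4 * Real.sin (η / 2) ^ 2) ^ (α / 2) + (4 * Real.sin (ξ / 2) ^ 2) ^ (α / 2)) * ‖S F w η ξ‖ ^ 2 := by
    have hpi : (-π : ℝ) ≤ π := by linarith [Real.pi_pos]
    apply intervalIntegral.integral_mono_on hpi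
    · exact (continuous_parametric_intervalIntegral_of_continuous'
        (f := fun η ξ => (4 * Real.sin (η / 2) ^ 2 + 4 * Real.sin (ξ / 2) ^ 2) ^ (α / 2) * ‖S F w η ξ‖ ^ 2)
        hprodA (-π) π).intervalIntegrable (-π) π
    · exact (continuous_parametric_intervalIntegral_of_continuous'
        (f := fun η ξ => ((4 * Real.sin (η / 2) ^ 2) ^ (α / 2) + (4 * Real.sin (ξ / 2) ^ 2) ^ (α / 2)) * ‖S F w η ξ‖ ^ 2)
        hprodT (-π) π).intervalIntegrable (-π) π
    · intro η _
      apply intervalIntegral.integral_mono_on hpi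
      · exact (hprodA.comp (Continuous.prodMk_right η)).intervalIntegrable (-π) π
      · exact (hprodT.comp (Continuous.prodMk_right η)).intervalIntegrable (-π) π
      · exact fun ξ _ => hptwise η ξ
  have hc : (0:ℝ) ≤ 1 / (4 * π ^ 2) := by positivity
  have := mul_le_mul_of_nonneg_left hintle hc
  nlinarith [sq_nonneg h, mul_le_mul_of_nonneg_left this (le_of_lt (mul_pos hh hh))]
end

section
/- Let α ∈ (1,2) and a_i^{(α)} = (-1)^i Γ(α+1)/(Γ(α/2-i+1)Γ(α/2+i+1)) for i ∈ ℤ. Then a_0^{(α)} > 0, a_i^{(α)} = a_{-i}^{(α)} for all i, a_i^{(α)} ≤ 0 for all i ≠ 0, and Σ_{i∈ℤ} a_i^{(α)} = 0. -/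
open Real Filter

noncomputable def Gm (s : ℝ) (k : ℤ) : ℝ := Real.Gamma (s + k)

noncomputable def gm (s : ℝ) (k : ℤ) : ℝ := (-1 : ℝ) ^ k / (Gm s (1 - k) * Gm s k)

lemma s_add_ne {s : ℝ} (h0 : 0 < s) (h1 : s < 1) (k : ℤ) : s + (k : ℝ) ≠ 0 := by
  intro h
  have hs : s = ((-k : ℤ) : ℝ) := by push_cast; linarith
  rw [hs] at h0 h1
  have h0' : (0:ℤ) < -k := by exact_mod_cast h0
  have h1' : (-k : ℤ) < 1 := by exact_mod_cast h1
  omega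

lemma Gm_ne {s : ℝ} (h0 : 0 < s) (h1 : s < 1) (k : ℤ) : Gm s k ≠ 0 := by
  apply Real.Gamma_ne_zero
  intro m hm
  exact s_add_ne h0 h1 (k + m) (by push_cast; linarith)

lemma Gm_rec {s : ℝ} (h0 : 0 < s) (h1 : s < 1) (k : ℤ) :
    Gm s (k + 1) = (s + k) * Gm s k := by
  unfold Gm
  rw [show s + ((k + 1 : ℤ) : ℝ) = (s + k) + 1 by push_cast; ring,
    Real.Gamma_add_one (s_add_ne h0 h1 k)]

lemma negpow_sq (k : ℤ) : ((-1 : ℝ) ^ k) * ((-1 : ℝ) ^ k) = 1 := by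
  rw [← mul_zpow]; norm_num

lemma negpow_inv (k : ℤ) : ((-1 : ℝ) ^ k)⁻¹ = (-1 : ℝ) ^ k :=
  inv_eq_of_mul_eq_one_left (negpow_sq k)

lemma gm_sym {s : ℝ} (k : ℤ) : gm s (1 - k) = -gm s k := by
  unfold gm
  rw [show (1 : ℤ) - (1 - k) = k by ring]
  rw [show (1 : ℤ) - k = -k + 1 by ring, zpow_add_one₀ (by norm_num : (-1:ℝ) ≠ 0),
    zpow_neg, negpow_inv]
  ring

lemma Gm_rec' {s : ℝ} (h0 : 0 < s) (h1 : s < 1) (k : ℤ) :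
    Gm s (1 - k) = (s - k) * Gm s (-k) := by
  have := Gm_rec h0 h1 (-k)
  rw [show (-k + 1 : ℤ) = 1 - k by ring] at this
  rw [this]; push_cast; ring

lemma gm_rec {s : ℝ} (h0 : 0 < s) (h1 : s < 1) (k : ℤ) :
    gm s (k + 1) = (((k : ℝ) - s) / ((k : ℝ) + s)) * gm s k := by
  unfold gm
  rw [show (1 : ℤ) - (k + 1) = -k by ring, Gm_rec h0 h1 k, Gm_rec' h0 h1 k,
    zpow_add_one₀ (by norm_num : (-1:ℝ) ≠ 0)]
  have e1 : Gm s (-k) ≠ 0 := Gm_ne h0 h1 _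
  have e2 : Gm s k ≠ 0 := Gm_ne h0 h1 _
  have e3 : s - (k:ℝ) ≠ 0 := by
    have := s_add_ne h0 h1 (-k); push_cast at this; intro h; apply this; linarith
  have e4 : s + (k:ℝ) ≠ 0 := s_add_ne h0 h1 k
  have e5 : (k:ℝ) + s ≠ 0 := by intro h; apply e4; linarith
  field_simp
  ring

lemma a_tele {s : ℝ} (A : ℝ) (h0 : 0 < s) (h1 : s < 1) (i : ℤ) :
    (-1:ℝ)^i * A / (Gm s (1 - i) * Gm s (1 + i)) =
      (-(A / (2*s))) * (gm s (i+1) - gm s i) := by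
  unfold gm
  rw [show (1:ℤ) - (i+1) = -i by ring, show (1:ℤ) + i = i + 1 by ring,
    Gm_rec h0 h1 i, Gm_rec' h0 h1 i, zpow_add_one₀ (by norm_num : (-1:ℝ) ≠ 0)]
  have e1 : Gm s (-i) ≠ 0 := Gm_ne h0 h1 _
  have e2 : Gm s i ≠ 0 := Gm_ne h0 h1 _
  have e3 : s - (i:ℝ) ≠ 0 := by
    have := s_add_ne h0 h1 (-i); push_cast at this; intro h; apply this; linarith
  have e4 : s + (i:ℝ) ≠ 0 := s_add_ne h0 h1 i
  have e6 : s ≠ 0 := ne_of_gt h0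
  field_simp
  ring

lemma gm_abs_le {s : ℝ} (h05 : 1/2 < s) (h1 : s < 1) (n : ℕ) (hn : 1 ≤ n) :
    |gm s n| * n ≤ |gm s 1| := by
  induction n, hn using Nat.le_induction with
  | base => simp
  | succ n hn ih =>
    have h0 : 0 < s := by linarith
    have hrec := gm_rec h0 h1 (n : ℤ)
    have hn1 : (1:ℝ) ≤ (n:ℝ) := by exact_mod_cast hn
    have hns : (0:ℝ) < (n:ℝ) - s := by linarith
    have hns' : (0:ℝ) < (n:ℝ) + s := by linarith
    have habs : |gm s ((n:ℤ)+1)| = (((n:ℝ) - s)/((n:ℝ) + s)) * |gm s n| := by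
      rw [hrec]; push_cast
      rw [abs_mul, abs_div, abs_of_pos hns, abs_of_pos hns']
    have key : (((n:ℝ) - s)/((n:ℝ) + s)) * ((n:ℝ)+1) ≤ (n:ℝ) := by
      rw [div_mul_eq_mul_div, div_le_iff₀ hns']
      nlinarith
    calc |gm s ((n+1 : ℕ) : ℤ)| * ((n+1 : ℕ) : ℝ)
        = (((n:ℝ) - s)/((n:ℝ) + s)) * ((n:ℝ)+1) * |gm s n| := by
          push_cast; rw [habs]; ring
      _ ≤ (n:ℝ) * |gm s n| := by
          apply mul_le_mul_of_nonneg_right key (abs_nonneg _)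
      _ = |gm s n| * n := by ring
      _ ≤ |gm s 1| := ih

lemma gm_tendsto {s : ℝ} (h05 : 1/2 < s) (h1 : s < 1) :
    Tendsto (fun n : ℕ => gm s n) atTop (nhds 0) := by
  refine squeeze_zero_norm' ?_ (tendsto_const_div_atTop_nhds_zero_nat |gm s 1|)
  filter_upwards [eventually_ge_atTop 1] with n hn
  have := gm_abs_le h05 h1 n hn
  have hn0 : (0:ℝ) < n := by exact_mod_cast hn
  rw [Real.norm_eq_abs, le_div_iff₀ hn0]
  linarith

lemma Gm_pos {s : ℝ} (h0 : 0 < s) (k : ℤ) (hk : 0 ≤ k) : 0 < Gm s k := by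
  apply Real.Gamma_pos_of_pos
  have : (0:ℝ) ≤ (k:ℝ) := by exact_mod_cast hk
  linarith

lemma Gm_sign {s : ℝ} (h0 : 0 < s) (h1 : s < 1) (m : ℕ) :
    0 < (-1:ℝ)^m * Gm s (-(m:ℤ)) := by
  induction m with
  | zero => simpa using Gm_pos h0 0 le_rfl
  | succ m ih =>
    have hrec : Gm s (-(m:ℤ)) = (s - ((m:ℝ)+1)) * Gm s (-((m+1:ℕ):ℤ)) := by
      have := Gm_rec h0 h1 (-((m:ℤ)+1))
      rw [show -((m:ℤ)+1) + 1 = -(m:ℤ) by ring] at this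
      rw [this]; push_cast; ring
    have hneg : s - ((m:ℝ)+1) < 0 := by
      have : (0:ℝ) ≤ (m:ℝ) := Nat.cast_nonneg m
      linarith
    rcases neg_one_pow_eq_or ℝ m with hp | hp <;>
      · rw [hp] at ih
        rw [pow_succ, hp]
        rw [hrec] at ih
        nlinarith

theorem stmt_17 (α : ℝ) (hα1 : 1 < α) (hα2 : α < 2)
    (a : ℤ → ℝ)
    (ha : ∀ i : ℤ, a i = (-1 : ℝ) ^ i * Real.Gamma (α + 1) /
      (Real.Gamma (α / 2 - i + 1) * Real.Gamma (α / 2 + i + 1))) :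
    0 < a 0 ∧ (∀ i : ℤ, a i = a (-i)) ∧ (∀ i : ℤ, i ≠ 0 → a i ≤ 0) ∧
      ∑' i : ℤ, a i = 0 := by
  set s : ℝ := α / 2 with hsdef
  have h0 : 0 < s := by rw [hsdef]; linarith
  have h05 : 1/2 < s := by rw [hsdef]; linarith
  have h1 : s < 1 := by rw [hsdef]; linarith
  set A : ℝ := Real.Gamma (α + 1) with hAdef
  have hA : 0 < A := Real.Gamma_pos_of_pos (by linarith)
  have ha' : ∀ i : ℤ, a i = (-1:ℝ)^i * A / (Gm s (1-i) * Gm s (1+i)) := by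
    intro i
    have e1 : Real.Gamma (s - (i:ℝ) + 1) = Gm s (1-i) := by
      unfold Gm; congr 1; push_cast; ring
    have e2 : Real.Gamma (s + (i:ℝ) + 1) = Gm s (1+i) := by
      unfold Gm; congr 1; push_cast; ring
    rw [ha i, e1, e2]
  -- Part 1
  have part1 : 0 < a 0 := by
    rw [ha' 0]
    have hg := Gm_pos h0 1 (by norm_num)
    norm_num
    exact div_pos hA (mul_pos hg hg)
  -- Part 2
  have part2 : ∀ i : ℤ, a i = a (-i) := by
    intro i
    rw [ha' i, ha' (-i), show (1:ℤ) - -i = 1 + i by ring,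
      show (1:ℤ) + -i = 1 - i by ring, zpow_neg, negpow_inv]
    ring
  -- Part 3
  have key3 : ∀ i : ℤ, 1 ≤ i → a i ≤ 0 := by
    intro i hi
    obtain ⟨m, rfl⟩ : ∃ m : ℕ, i = (m:ℤ) + 1 := ⟨(i-1).toNat, by omega⟩
    rw [ha' _]
    have hGp : 0 < Gm s (1 + ((m:ℤ)+1)) := Gm_pos h0 _ (by omega)
    have hsg := Gm_sign h0 h1 m
    rw [show (1:ℤ) - ((m:ℤ)+1) = -(m:ℤ) by ring,
      zpow_add_one₀ (by norm_num : (-1:ℝ) ≠ 0), zpow_natCast]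
    rcases neg_one_pow_eq_or ℝ m with hp | hp <;> rw [hp] at hsg ⊢
    · apply div_nonpos_of_nonpos_of_nonneg
      · nlinarith
      · nlinarith
    · apply div_nonpos_of_nonneg_of_nonpos
      · nlinarith
      · nlinarith
  have part3 : ∀ i : ℤ, i ≠ 0 → a i ≤ 0 := by
    intro i hi
    rcases le_or_gt 1 i with h | h
    · exact key3 i h
    · rw [part2 i]; exact key3 (-i) (by omega)
  refine ⟨part1, part2, part3, ?_⟩
  -- Part 4
  set c : ℝ := -(A / (2*s)) with hcdef
  have haeq : ∀ i : ℤ, a i = c * (gm s (i+1) - gm s i) := by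
    intro i
    rw [ha' i, a_tele A h0 h1 i]
  have hps : ∀ n : ℕ, ∑ i ∈ Finset.range n, a i = c * gm s n - c * gm s 0 := by
    intro n
    calc ∑ i ∈ Finset.range n, a i
        = ∑ i ∈ Finset.range n,
            ((fun k : ℕ => c * gm s k) (i+1) - (fun k : ℕ => c * gm s k) i) := by
          apply Finset.sum_congr rfl
          intro i _
          simp only
          rw [haeq i]
          push_cast
          ring
      _ = c * gm s n - c * gm s 0 := by
          rw [Finset.sum_range_sub (fun k : ℕ => c * gm s k)]
          norm_num
  have hns : ∀ n : ℕ, ∑ i ∈ Finset.range n, a (-((i:ℤ)+1))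
      = c * gm s 0 - c * gm s (-(n:ℤ)) := by
    intro n
    calc ∑ i ∈ Finset.range n, a (-((i:ℤ)+1))
        = ∑ i ∈ Finset.range n,
            ((fun k : ℕ => c * gm s (-(k:ℤ))) i - (fun k : ℕ => c * gm s (-(k:ℤ))) (i+1)) := by
          apply Finset.sum_congr rfl
          intro i _
          simp only
          rw [haeq (-((i:ℤ)+1))]
          rw [show -((i:ℤ)+1) + 1 = -(i:ℤ) by ring]
          push_cast
          ring
      _ = c * gm s 0 - c * gm s (-(n:ℤ)) := by
          rw [Finset.sum_range_sub' (fun k : ℕ => c * gm s (-(k:ℤ)))]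
          try norm_num
  have hgt : Tendsto (fun n : ℕ => gm s n) atTop (nhds 0) := gm_tendsto h05 h1
  have hgneg : ∀ n : ℕ, gm s (-(n:ℤ)) = -gm s ((n:ℤ)+1) := by
    intro n
    rw [← gm_sym (s := s) ((n:ℤ)+1)]
    congr 1
    ring
  have hgt1 : Tendsto (fun n : ℕ => gm s ((n:ℤ)+1)) atTop (nhds 0) := by
    have h := hgt.comp (tendsto_add_atTop_nat 1)
    convert h using 2 with n
    simp
  have hgt' : Tendsto (fun n : ℕ => gm s (-(n:ℤ))) atTop (nhds 0) := by
    simp only [hgneg]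
    simpa using hgt1.neg
  have hb : ∀ n : ℕ, 1 ≤ n → |gm s (n:ℤ)| ≤ |gm s 1| := by
    intro n hn
    have h := gm_abs_le h05 h1 n hn
    have hn' : (1:ℝ) ≤ (n:ℝ) := by exact_mod_cast hn
    nlinarith [abs_nonneg (gm s (n:ℤ))]
  have hb' : ∀ n : ℕ, |gm s (-(n:ℤ))| ≤ |gm s 1| := by
    intro n
    rw [hgneg n, abs_neg]
    have := hb (n+1) (by omega)
    push_cast at this
    exact this
  -- summability, positive side
  have hshift : Summable (fun n : ℕ => a ((n+1 : ℕ) : ℤ)) := by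
    rw [← summable_neg_iff]
    apply summable_of_sum_range_le (c := a 0 + c * gm s 0 + |c| * |gm s 1|)
    · intro n
      simp only [neg_nonneg]
      apply part3
      exact_mod_cast Nat.succ_ne_zero n
    · intro n
      have hsplit : ∑ i ∈ Finset.range (n+1), a i
          = (∑ i ∈ Finset.range n, a ((i+1:ℕ))) + a 0 := by
        exact Finset.sum_range_succ' (fun i : ℕ => a i) n
      have := hps (n+1)
      rw [hsplit] at this
      have hsum : ∑ i ∈ Finset.range n, -a ((i+1:ℕ))
          = -(c * gm s ((n+1:ℕ)) - c * gm s 0 - a 0) := by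
        rw [Finset.sum_neg_distrib]
        rw [show (∑ i ∈ Finset.range n, a ((i+1:ℕ)))
            = c * gm s ((n+1:ℕ)) - c * gm s 0 - a 0 by linarith]
      rw [hsum]
      have hbb : |gm s ((n+1:ℕ):ℤ)| ≤ |gm s 1| := hb (n+1) (by omega)
      have h1' : -(c * gm s ((n+1:ℕ))) ≤ |c| * |gm s 1| := by
        calc -(c * gm s ((n+1:ℕ))) ≤ |c * gm s ((n+1:ℕ))| := neg_le_abs _
          _ = |c| * |gm s ((n+1:ℕ):ℤ)| := abs_mul _ _
          _ ≤ |c| * |gm s 1| := by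
              apply mul_le_mul_of_nonneg_left hbb (abs_nonneg _)
      linarith
  have hsum_pos : Summable (fun n : ℕ => a n) :=
    (summable_nat_add_iff (f := fun n : ℕ => a (n : ℤ)) 1).mp hshift
  -- summability, negative side
  have hsum_neg : Summable (fun n : ℕ => a (-((n:ℤ)+1))) := by
    rw [← summable_neg_iff]
    apply summable_of_sum_range_le (c := |c| * |gm s 1| + |c| * |gm s 1|)
    · intro n
      simp only [neg_nonneg]
      apply part3
      omega
    · intro n
      rw [Finset.sum_neg_distrib, hns n]
      have h1' : -(c * gm s 0) ≤ |c| * |gm s 1| := by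
        calc -(c * gm s 0) ≤ |c * gm s 0| := neg_le_abs _
          _ = |c| * |gm s ((0:ℕ):ℤ)| := by rw [abs_mul]; norm_num
          _ ≤ |c| * |gm s 1| := by
              have h00 : |gm s ((0:ℕ):ℤ)| = |gm s (-(0:ℕ):ℤ)| := by norm_num
              rw [h00]
              exact mul_le_mul_of_nonneg_left (hb' 0) (abs_nonneg _)
      have h2' : c * gm s (-(n:ℤ)) ≤ |c| * |gm s 1| := by
        calc c * gm s (-(n:ℤ)) ≤ |c * gm s (-(n:ℤ))| := le_abs_self _
          _ = |c| * |gm s (-(n:ℤ))| := abs_mul _ _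
          _ ≤ |c| * |gm s 1| := mul_le_mul_of_nonneg_left (hb' n) (abs_nonneg _)
      linarith
  -- identify the sums
  have hhs_pos : HasSum (fun n : ℕ => a n) (-(c * gm s 0)) := by
    have h := hsum_pos.hasSum
    have ht := h.tendsto_sum_nat
    have ht' : Tendsto (fun n : ℕ => c * gm s n - c * gm s 0) atTop
        (nhds (c * 0 - c * gm s 0)) := by
      exact ((hgt.const_mul c).sub_const _)
    simp only [hps] at ht
    have := tendsto_nhds_unique ht ht'
    rw [this] at h
    simpa using h
  have hhs_neg : HasSum (fun n : ℕ => a (-((n:ℤ)+1))) (c * gm s 0) := by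
    have h := hsum_neg.hasSum
    have ht := h.tendsto_sum_nat
    have ht' : Tendsto (fun n : ℕ => c * gm s 0 - c * gm s (-(n:ℤ))) atTop
        (nhds (c * gm s 0 - c * 0)) := by
      exact (tendsto_const_nhds.sub (hgt'.const_mul c))
    simp only [hns] at ht
    have := tendsto_nhds_unique ht ht'
    rw [this] at h
    simpa using h
  have htot : HasSum a (-(c * gm s 0) + c * gm s 0) :=
    HasSum.of_nat_of_neg_add_one hhs_pos hhs_neg
  rw [neg_add_cancel] at htot
  exact htot.tsum_eq
end
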